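/- arXiv:2011.03458 — 5 statements merged into one kernel-verified Lean document; each statement's English description precedes it below -/
import Mathlib

section
/- Let n : ℕ and let I be any polynomial in MvPolynomial (Fin (n+1)) ℚ. Then the shear substitution of I expands as a Taylor-type series in the operator D: for every N ≥ the weighted total degree of I (the maximum of Σ_i i·ν_i over monomials a_0^{ν_0}⋯a_n^{ν_n} occurring in I), one has φ(I) = Σ_{i=0}^{N} (1/i!) · z^i · ι(D^i(I)); in particular D^i(I) = 0 for all i exceeding the weighted total degree of I. -/
open MvPolynomial

/-- The operator `D(I) = Σ_{i=1}^{n} i · a_{i-1} · ∂I/∂a_i`. -/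
noncomputable def Dop (n : ℕ) :
    MvPolynomial (Fin (n+1)) ℚ →ₗ[ℚ] MvPolynomial (Fin (n+1)) ℚ :=
  ∑ i : Fin n, ((i : ℚ) + 1) •
    ((LinearMap.mulLeft ℚ (X i.castSucc)).comp (pderiv i.succ).toLinearMap)

/-- The operator `Δ(I) = Σ_{i=0}^{n-1} (n-i) · a_{i+1} · ∂I/∂a_i`. -/
noncomputable def Δop (n : ℕ) :
    MvPolynomial (Fin (n+1)) ℚ →ₗ[ℚ] MvPolynomial (Fin (n+1)) ℚ :=
  ∑ i : Fin n, ((n : ℚ) - (i : ℚ)) •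
    ((LinearMap.mulLeft ℚ (X i.succ)).comp (pderiv i.castSucc).toLinearMap)

/-- `Q_n(k,m)`: span of monomials of degree `k` and weight `m`. -/
noncomputable def Qspace (n k m : ℕ) : Submodule ℚ (MvPolynomial (Fin (n+1)) ℚ) :=
  Submodule.span ℚ { p | ∃ ν : Fin (n+1) →₀ ℕ,
    (∑ i : Fin (n+1), ν i) = k ∧ (∑ i : Fin (n+1), (i : ℕ) * ν i) = m ∧ p = monomial ν (1 : ℚ) }

/-- `S_n(k,m)`: semi-invariants of degree `k` and weight `m`. -/
noncomputable def Sspace (n k m : ℕ) : Submodule ℚ (MvPolynomial (Fin (n+1)) ℚ) :=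
  Qspace n k m ⊓ LinearMap.ker (Dop n)

/-- `p(k,n,m)`: number of partitions of `m` in a `k × n` rectangle. -/
def pRect (k n m : ℕ) : ℕ :=
  (Finset.univ.filter
    (fun P : Nat.Partition m => Multiset.card P.parts ≤ k ∧ ∀ x ∈ P.parts, x ≤ n)).card

/-- Coefficient embedding `ℚ[a] → ℚ[z][a]`. -/
noncomputable def ιmap (n : ℕ) :
    MvPolynomial (Fin (n+1)) ℚ →+* MvPolynomial (Fin (n+1)) (Polynomial ℚ) :=
  MvPolynomial.map (Polynomial.C)

/-- The shear substitution `a_i ↦ a_i' = Σ_{j=0}^{i} C(i,j) a_{i-j} z^j`. -/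
noncomputable def φmap (n : ℕ) :
    MvPolynomial (Fin (n+1)) ℚ →ₐ[ℚ] MvPolynomial (Fin (n+1)) (Polynomial ℚ) :=
  aeval (fun i : Fin (n+1) => ∑ j ∈ Finset.range ((i : ℕ) + 1),
    (C ((Nat.choose (i : ℕ) j : Polynomial ℚ) * Polynomial.X ^ j)) *
      X (⟨(i : ℕ) - j, Nat.lt_of_le_of_lt (Nat.sub_le _ _) i.isLt⟩ : Fin (n+1)))

/-- The vertical shear substitution `a_i ↦ a_i'' = Σ_{j=0}^{n-i} C(n-i,j) a_{i+j} z^j`. -/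
noncomputable def ψmap (n : ℕ) :
    MvPolynomial (Fin (n+1)) ℚ →ₐ[ℚ] MvPolynomial (Fin (n+1)) (Polynomial ℚ) :=
  aeval (fun i : Fin (n+1) => ∑ j ∈ (Finset.range (n - (i : ℕ) + 1)).attach,
    (C ((Nat.choose (n - (i : ℕ)) j.1 : Polynomial ℚ) * Polynomial.X ^ j.1)) *
      X (⟨(i : ℕ) + j.1, by
        have h1 := Finset.mem_range.mp j.2
        have h2 := i.isLt
        omega⟩ : Fin (n+1)))

/-- The weighted total degree of `I`: max of `Σ_i i·ν_i` over monomials of `I`. -/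
def wdeg (n : ℕ) (I : MvPolynomial (Fin (n+1)) ℚ) : ℕ :=
  I.support.sup (fun ν => ∑ i : Fin (n+1), (i : ℕ) * ν i)

section ShearAux

open Finset

variable {n : ℕ}

/-- The `i`-th Taylor term. -/
noncomputable def tt (n : ℕ) (i : ℕ) (I : MvPolynomial (Fin (n+1)) ℚ) :
    MvPolynomial (Fin (n+1)) (Polynomial ℚ) :=
  ((Nat.factorial i : ℚ)⁻¹) • (C (Polynomial.X ^ i) * ιmap n ((Dop n ^ i) I))

/-- weight of an exponent vector -/
def wt (n : ℕ) (ν : Fin (n+1) →₀ ℕ) : ℕ := ∑ i : Fin (n+1), (i : ℕ) * ν i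

lemma X_eq_monomial (k : Fin (n+1)) :
    (X k : MvPolynomial (Fin (n+1)) ℚ) = monomial (Finsupp.single k 1) 1 := rfl

lemma Dop_mul (p q : MvPolynomial (Fin (n+1)) ℚ) :
    Dop n (p * q) = p * Dop n q + Dop n p * q := by
  simp only [Dop, LinearMap.sum_apply, LinearMap.smul_apply, LinearMap.coe_comp,
    Function.comp_apply, LinearMap.mulLeft_apply, Derivation.coeFn_coe, pderiv_mul]
  rw [Finset.mul_sum, Finset.sum_mul, ← Finset.sum_add_distrib]
  refine Finset.sum_congr rfl fun i _ => ?_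
  rw [smul_eq_C_mul, smul_eq_C_mul, smul_eq_C_mul]
  ring

lemma Dpow_mul (p q : MvPolynomial (Fin (n+1)) ℚ) (i : ℕ) :
    (Dop n ^ i) (p * q) = ∑ ij ∈ Finset.HasAntidiagonal.antidiagonal i,
      (i.choose ij.1) • ((Dop n ^ ij.1) p * (Dop n ^ ij.2) q) := by
  induction i with
  | zero => simp
  | succ i ih =>
    rw [Finset.sum_antidiagonal_choose_succ_nsmul
      (fun a b => (Dop n ^ a) p * (Dop n ^ b) q) i]
    rw [pow_succ', Module.End.mul_apply, ih, map_sum]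
    simp only [map_nsmul, Dop_mul, smul_add, Finset.sum_add_distrib]
    congr 1
    · refine Finset.sum_congr rfl fun ij hij => ?_
      congr 1
      rw [pow_succ', Module.End.mul_apply]
    · refine Finset.sum_congr rfl fun ij hij => ?_
      rw [i.choose_symm_of_eq_add (Finset.HasAntidiagonal.mem_antidiagonal.1 hij).symm]
      congr 1
      rw [pow_succ', Module.End.mul_apply]

lemma Dpow_mul' (p q : MvPolynomial (Fin (n+1)) ℚ) (i : ℕ) :
    (Dop n ^ i) (p * q) = ∑ j ∈ range (i+1),
      (i.choose j) • ((Dop n ^ j) p * (Dop n ^ (i - j)) q) := by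
  rw [Dpow_mul]
  exact Finset.Nat.sum_antidiagonal_eq_sum_range_succ
    (fun a b => (i.choose a) • ((Dop n ^ a) p * (Dop n ^ b) q)) i

lemma wt_add (μ ν : Fin (n+1) →₀ ℕ) : wt n (μ + ν) = wt n μ + wt n ν := by
  simp [wt, Finsupp.add_apply, Nat.mul_add, Finset.sum_add_distrib]

lemma wt_single (a : Fin (n+1)) : wt n (Finsupp.single a 1) = (a : ℕ) := by
  rw [wt, Finset.sum_eq_single a]
  · simp
  · intro b _ hb; simp [Finsupp.single_apply, (Ne.symm hb)]
  · simp

lemma wt_sub_single_add (ν : Fin (n+1) →₀ ℕ) (a b : Fin (n+1)) (h : 1 ≤ ν a) :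
    wt n (ν - Finsupp.single a 1 + Finsupp.single b 1) + (a : ℕ)
      = wt n ν + (b : ℕ) := by
  have ha : wt n (Finsupp.single a 1) = (a : ℕ) := wt_single a
  have hb : wt n (Finsupp.single b 1) = (b : ℕ) := wt_single b
  rw [← ha, ← hb, ← wt_add, ← wt_add]
  congr 1
  ext k
  simp only [Finsupp.add_apply, Finsupp.tsub_apply, Finsupp.single_apply]
  rcases eq_or_ne a k with rfl | hak
  · split_ifs <;> omega
  · simp [if_neg hak]

lemma Dop_monomial (ν : Fin (n+1) →₀ ℕ) (c : ℚ) :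
    Dop n (monomial ν c) = ∑ i : Fin n,
      monomial (ν - Finsupp.single i.succ 1 + Finsupp.single i.castSucc 1)
        (((i : ℚ) + 1) * (c * (ν i.succ : ℚ))) := by
  simp only [Dop, LinearMap.sum_apply, LinearMap.smul_apply, LinearMap.coe_comp,
    Function.comp_apply, LinearMap.mulLeft_apply, Derivation.coeFn_coe, pderiv_monomial]
  refine Finset.sum_congr rfl fun i _ => ?_
  rw [X_eq_monomial, monomial_mul, smul_monomial]
  rw [add_comm (Finsupp.single i.castSucc 1)]
  congr 1
  rw [smul_eq_mul]
  ring

lemma Dpow_monomial_eq_zero : ∀ (i : ℕ) (ν : Fin (n+1) →₀ ℕ) (c : ℚ),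
    wt n ν < i → (Dop n ^ i) (monomial ν c) = 0 := by
  intro i
  induction i with
  | zero => intro ν c h; omega
  | succ i ih =>
    intro ν c h
    rw [pow_succ, Module.End.mul_apply, Dop_monomial, map_sum]
    refine Finset.sum_eq_zero fun j _ => ?_
    rcases Nat.eq_zero_or_pos (ν j.succ) with h0 | h1
    · rw [h0]
      simp
    · apply ih
      have := wt_sub_single_add ν j.succ j.castSucc h1
      have hjs : ((j.succ : Fin (n+1)) : ℕ) = (j : ℕ) + 1 := rfl
      have hjc : ((j.castSucc : Fin (n+1)) : ℕ) = (j : ℕ) := rfl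
      omega

lemma wdeg_le_iff {I : MvPolynomial (Fin (n+1)) ℚ} {m : ℕ} :
    wdeg n I ≤ m ↔ ∀ ν ∈ I.support, wt n ν ≤ m := Finset.sup_le_iff

lemma Dpow_eq_zero (I : MvPolynomial (Fin (n+1)) ℚ) (i : ℕ) (h : wdeg n I < i) :
    (Dop n ^ i) I = 0 := by
  conv_lhs => rw [I.as_sum]
  rw [map_sum]
  refine Finset.sum_eq_zero fun ν hν => ?_
  exact Dpow_monomial_eq_zero i ν _ (lt_of_le_of_lt (Finset.le_sup hν) h)

lemma tt_eq_zero {i : ℕ} {I : MvPolynomial (Fin (n+1)) ℚ}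
    (h : (Dop n ^ i) I = 0) : tt n i I = 0 := by
  simp [tt, h]

lemma Dop_X (m : Fin (n+1)) :
    Dop n (X m) = ((m : ℕ) : ℚ) •
      (X (⟨(m : ℕ) - 1, by omega⟩ : Fin (n+1)) : MvPolynomial (Fin (n+1)) ℚ) := by
  induction m using Fin.cases with
  | zero =>
    simp only [Dop, LinearMap.sum_apply, LinearMap.smul_apply, LinearMap.coe_comp,
      Function.comp_apply, LinearMap.mulLeft_apply, Derivation.coeFn_coe]
    rw [Finset.sum_eq_zero fun j _ => by
      rw [pderiv_X_of_ne (Fin.succ_ne_zero j).symm]; simp]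
    simp
  | succ j =>
    simp only [Dop, LinearMap.sum_apply, LinearMap.smul_apply, LinearMap.coe_comp,
      Function.comp_apply, LinearMap.mulLeft_apply, Derivation.coeFn_coe]
    rw [Finset.sum_eq_single j]
    · rw [pderiv_X_self, mul_one]
      congr 1
      simp [Fin.val_succ]
    · intro b _ hb
      rw [pderiv_X_of_ne (fun hc => hb (Fin.succ_injective n hc.symm))]
      simp
    · intro habs
      exact absurd (Finset.mem_univ j) habs

lemma Dpow_X (k : Fin (n+1)) : ∀ i : ℕ, i ≤ (k : ℕ) →
    (Dop n ^ i) (X k) = (((k : ℕ).descFactorial i : ℚ)) •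
      (X (⟨(k : ℕ) - i, by omega⟩ : Fin (n+1)) : MvPolynomial (Fin (n+1)) ℚ) := by
  intro i
  induction i with
  | zero =>
    intro _
    simp only [pow_zero, Module.End.one_apply, Nat.descFactorial_zero, Nat.cast_one, one_smul]
    rfl
  | succ i ih =>
    intro h
    rw [pow_succ', Module.End.mul_apply, ih (by omega), map_smul, Dop_X, smul_smul]
    congr 1
    show ((k : ℕ).descFactorial i : ℚ) * (((k:ℕ) - i : ℕ) : ℚ) = _
    rw [Nat.descFactorial_succ]
    push_cast
    ring

lemma Dpow_X_eq_zero (k : Fin (n+1)) (i : ℕ) (h : (k : ℕ) < i) :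
    (Dop n ^ i) (X k : MvPolynomial (Fin (n+1)) ℚ) = 0 := by
  rw [X_eq_monomial]
  exact Dpow_monomial_eq_zero i _ _ (by rw [wt_single]; exact h)

lemma phi_X (k : Fin (n+1)) (N : ℕ) (h : (k : ℕ) ≤ N) :
    φmap n (X k) = ∑ i ∈ range (N+1), tt n i (X k) := by
  rw [show (∑ i ∈ range (N+1), tt n i (X k)) = ∑ i ∈ range ((k:ℕ)+1), tt n i (X k) from
    (Finset.sum_subset (Finset.range_subset_range.mpr (by omega)) fun i _ hi =>
      tt_eq_zero (Dpow_X_eq_zero k i (by simp at hi; omega))).symm]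
  rw [φmap, aeval_X]
  refine Finset.sum_congr rfl fun i hi => ?_
  have hik : i ≤ (k:ℕ) := by simp at hi; omega
  have hx : ∀ (a b c : Polynomial ℚ) (u : Fin (n+1)),
      (C a * (C b * (C c * X u)) : MvPolynomial (Fin (n+1)) (Polynomial ℚ))
        = C (a * b * c) * X u := by
    intro a b c u
    rw [map_mul, map_mul]
    ring
  rw [tt, Dpow_X k i hik, smul_eq_C_mul, ιmap]
  conv_rhs => rw [map_mul, MvPolynomial.map_C, MvPolynomial.map_X, Algebra.smul_def,
    IsScalarTower.algebraMap_apply ℚ (Polynomial ℚ) (MvPolynomial (Fin (n+1)) (Polynomial ℚ)),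
    MvPolynomial.algebraMap_eq, Polynomial.algebraMap_eq, hx]
  congr 1
  rw [Nat.descFactorial_eq_factorial_mul_choose, ← Polynomial.C_eq_natCast]
  push_cast
  have hfac : ((i.factorial : ℚ)) ≠ 0 := Nat.cast_ne_zero.mpr i.factorial_ne_zero
  congr 1
  rw [Polynomial.C_mul]
  rw [show (Polynomial.C ((i.factorial : ℚ))⁻¹ * Polynomial.X ^ i *
      (Polynomial.C ((i.factorial : ℚ)) * Polynomial.C ((((k:ℕ).choose i : ℕ)) : ℚ))
        : Polynomial ℚ)
      = Polynomial.C (((i.factorial : ℚ))⁻¹ * ((i.factorial : ℚ))) *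
        (Polynomial.C ((((k:ℕ).choose i : ℕ)) : ℚ) * Polynomial.X ^ i) from by
    rw [Polynomial.C_mul]; ring]
  rw [inv_mul_cancel₀ hfac, Polynomial.C_1, one_mul]

lemma phi_C (c : ℚ) (N : ℕ) :
    φmap n (C c : MvPolynomial (Fin (n+1)) ℚ) = ∑ i ∈ range (N+1), tt n i (C c) := by
  have hD : ∀ i, 0 < i → (Dop n ^ i) (C c : MvPolynomial (Fin (n+1)) ℚ) = 0 := by
    intro i hi
    rw [show (C c : MvPolynomial (Fin (n+1)) ℚ) = monomial 0 c from rfl]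
    exact Dpow_monomial_eq_zero i 0 c (by simpa [wt] using hi)
  rw [Finset.sum_eq_single 0]
  · simp [tt, ιmap, φmap, MvPolynomial.map_C]
  · exact fun b _ hb => tt_eq_zero (hD b (Nat.pos_of_ne_zero hb))
  · intro habs
    exact absurd (Finset.mem_range.mpr (by omega)) habs

lemma triangle_sum {M : Type*} [AddCommMonoid M] (g : ℕ → ℕ → M) (A B : ℕ)
    (hgz : ∀ j k, A < j ∨ B < k → g j k = 0) :
    ∑ j ∈ range (A+1), ∑ k ∈ range (B+1), g j k
      = ∑ i ∈ range (A+B+1), ∑ j ∈ range (i+1), g j (i-j) := by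
  classical
  have h1 : ∀ i, ∑ j ∈ range (i+1), g j (i-j)
      = ∑ ij ∈ Finset.HasAntidiagonal.antidiagonal i, g ij.1 ij.2 :=
    fun i => (Finset.Nat.sum_antidiagonal_eq_sum_range_succ (fun a b => g a b) i).symm
  simp_rw [h1]
  have hdisj : Set.PairwiseDisjoint ↑(range (A+B+1)) (fun i : ℕ => Finset.HasAntidiagonal.antidiagonal i) := by
    intro x _ y _ hxy
    simp only [Function.onFun, Finset.disjoint_left]
    intro a ha hb
    exact hxy (by
      rw [← Finset.HasAntidiagonal.mem_antidiagonal.mp ha, ← Finset.HasAntidiagonal.mem_antidiagonal.mp hb])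
  rw [← Finset.sum_biUnion hdisj, ← Finset.sum_product']
  have e1 : ∑ p ∈ (range (A+1)) ×ˢ (range (B+1)), g p.1 p.2
      = ∑ p ∈ (range (A+B+1)) ×ˢ (range (A+B+1)), g p.1 p.2 := by
    refine Finset.sum_subset ?_ ?_
    · refine Finset.product_subset_product ?_ ?_ <;> exact Finset.range_subset_range.mpr (by omega)
    · intro p hp hnp
      simp only [Finset.mem_product, Finset.mem_range] at hp hnp
      exact hgz p.1 p.2 (by omega)
  have e2 : ∑ p ∈ (range (A+B+1)).biUnion (fun i : ℕ => Finset.HasAntidiagonal.antidiagonal i), g p.1 p.2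
      = ∑ p ∈ (range (A+B+1)) ×ˢ (range (A+B+1)), g p.1 p.2 := by
    refine Finset.sum_subset ?_ ?_
    · intro p hp
      simp only [Finset.mem_biUnion, Finset.mem_range, Finset.HasAntidiagonal.mem_antidiagonal] at hp
      obtain ⟨i, hi, hpi⟩ := hp
      simp only [Finset.mem_product, Finset.mem_range]
      omega
    · intro p hp hnp
      simp only [Finset.mem_biUnion, Finset.mem_range, Finset.HasAntidiagonal.mem_antidiagonal] at hnp
      push_neg at hnp
      simp only [Finset.mem_product, Finset.mem_range] at hp
      refine hgz p.1 p.2 ?_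
      by_contra hc
      push_neg at hc
      exact (hnp (p.1 + p.2) (by omega)) rfl
  rw [e1, e2]

lemma T_mul (p q : MvPolynomial (Fin (n+1)) ℚ) (A B : ℕ)
    (hp : φmap n p = ∑ i ∈ range (A+1), tt n i p)
    (hp0 : ∀ i, A < i → (Dop n ^ i) p = 0)
    (hq : φmap n q = ∑ i ∈ range (B+1), tt n i q)
    (hq0 : ∀ i, B < i → (Dop n ^ i) q = 0) :
    φmap n (p * q) = ∑ i ∈ range (A+B+1), tt n i (p * q) := by
  classical
  set g : ℕ → ℕ → MvPolynomial (Fin (n+1)) (Polynomial ℚ) := fun j k =>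
    ((j.factorial : ℚ)⁻¹ * (k.factorial : ℚ)⁻¹) •
      (C (Polynomial.X ^ (j+k)) * (ιmap n ((Dop n ^ j) p) * ιmap n ((Dop n ^ k) q)))
    with hg
  have hgz : ∀ j k, A < j ∨ B < k → g j k = 0 := by
    intro j k hjk
    rcases hjk with hj | hk
    · rw [hg]; simp only; rw [hp0 j hj]; simp
    · rw [hg]; simp only; rw [hq0 k hk]; simp
  have hmul : ∀ j k, tt n j p * tt n k q = g j k := by
    intro j k
    rw [tt, tt, hg]
    simp only
    rw [smul_mul_smul_comm]
    congr 1
    rw [pow_add, map_mul]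
    ring
  have hterm : ∀ i, tt n i (p * q) = ∑ j ∈ range (i+1), g j (i - j) := by
    intro i
    rw [tt, Dpow_mul', map_sum, Finset.mul_sum, Finset.smul_sum]
    refine Finset.sum_congr rfl fun j hj => ?_
    have hji : j ≤ i := by simp at hj; omega
    rw [hg]
    simp only
    rw [map_nsmul, ← Nat.cast_smul_eq_nsmul ℚ, mul_smul_comm, smul_smul, map_mul]
    have hei : j + (i - j) = i := by omega
    rw [hei]
    congr 1
    have h1 : (i.choose j) * j.factorial * (i-j).factorial = i.factorial :=
      Nat.choose_mul_factorial_mul_factorial hji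
    have h2 : ((i.choose j : ℚ)) * (j.factorial : ℚ) * ((i-j).factorial : ℚ)
        = (i.factorial : ℚ) := by exact_mod_cast congrArg (Nat.cast : ℕ → ℚ) h1
    have hj0 : ((j.factorial : ℚ)) ≠ 0 := Nat.cast_ne_zero.mpr j.factorial_ne_zero
    have hij0 : (((i-j).factorial : ℚ)) ≠ 0 := Nat.cast_ne_zero.mpr (i-j).factorial_ne_zero
    have hi0 : ((i.factorial : ℚ)) ≠ 0 := Nat.cast_ne_zero.mpr i.factorial_ne_zero
    field_simp
    linear_combination h2
  rw [map_mul, hp, hq, Finset.sum_mul_sum]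
  simp_rw [hmul, hterm]
  exact triangle_sum g A B hgz

lemma phi_monomial : ∀ (d : ℕ) (ν : Fin (n+1) →₀ ℕ) (c : ℚ), (∑ k : Fin (n+1), ν k) ≤ d →
    φmap n (monomial ν c) = ∑ i ∈ range (wt n ν + 1), tt n i (monomial ν c) := by
  have hzero : ∀ c : ℚ, φmap n (monomial (0 : Fin (n+1) →₀ ℕ) c)
      = ∑ i ∈ range (wt n (0 : Fin (n+1) →₀ ℕ) + 1), tt n i (monomial 0 c) := by
    intro c
    have hw : wt n (0 : Fin (n+1) →₀ ℕ) = 0 := by simp [wt]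
    rw [hw, monomial_zero']
    exact phi_C c 0
  intro d
  induction d with
  | zero =>
    intro ν c h
    have hν : ν = 0 := by
      ext k
      exact Finset.sum_eq_zero_iff.mp (Nat.le_zero.mp h) k (Finset.mem_univ k)
    rw [hν]
    exact hzero c
  | succ d ih =>
    intro ν c h
    rcases eq_or_ne ν 0 with rfl | hν
    · exact hzero c
    · obtain ⟨k, hk⟩ : ∃ k, ν k ≠ 0 := by
        by_contra hall
        push_neg at hall
        exact hν (Finsupp.ext fun k => hall k)
      set ν' := ν - Finsupp.single k 1 with hν'
      have hk1 : 1 ≤ ν k := Nat.one_le_iff_ne_zero.mpr hk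
      have hsum : ν' + Finsupp.single k 1 = ν := by
        ext j
        simp only [hν', Finsupp.add_apply, Finsupp.tsub_apply, Finsupp.single_apply]
        rcases eq_or_ne k j with rfl | hkj
        · split_ifs <;> omega
        · simp [if_neg hkj]
      have h2 : (∑ j : Fin (n+1), (Finsupp.single k 1) j) = 1 := by
        rw [Finset.sum_eq_single k]
        · simp
        · intro b _ hb
          simp [Finsupp.single_apply, (Ne.symm hb)]
        · simp
      have h1 : (∑ j : Fin (n+1), ν' j) + (∑ j : Fin (n+1), (Finsupp.single k 1) j)
          = ∑ j : Fin (n+1), ν j := by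
        rw [← Finset.sum_add_distrib]
        refine Finset.sum_congr rfl fun j _ => ?_
        conv_rhs => rw [← hsum]
        rfl
      have hdeg : (∑ j : Fin (n+1), ν' j) ≤ d := by omega
      have hmono : (monomial ν c : MvPolynomial (Fin (n+1)) ℚ)
          = monomial ν' c * X k := by
        rw [X_eq_monomial, monomial_mul, hsum, mul_one]
      have hwt : wt n ν = wt n ν' + (k : ℕ) := by
        rw [← hsum, wt_add, wt_single]
      rw [hmono, hwt]
      exact T_mul (monomial ν' c) (X k) (wt n ν') (k : ℕ)
        (ih ν' c hdeg)
        (fun i hi => Dpow_monomial_eq_zero i ν' c hi)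
        (phi_X k (k : ℕ) le_rfl)
        (fun i hi => Dpow_X_eq_zero k i hi)

end ShearAux

/-- Taylor-type expansion of the shear substitution in the operator `D`. -/
theorem shear_taylor_expansion (n : ℕ) (I : MvPolynomial (Fin (n+1)) ℚ) :
    (∀ N : ℕ, wdeg n I ≤ N →
      φmap n I = ∑ i ∈ Finset.range (N + 1),
        ((Nat.factorial i : ℚ)⁻¹) • (C (Polynomial.X ^ i) * ιmap n ((Dop n ^ i) I))) ∧
    ∀ i : ℕ, wdeg n I < i → (Dop n ^ i) I = 0 := by
  constructor
  · intro N hN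
    show φmap n I = ∑ i ∈ Finset.range (N + 1), tt n i I
    have key : ∀ ν ∈ I.support, φmap n (monomial ν (coeff ν I)) =
        ∑ i ∈ Finset.range (N+1), tt n i (monomial ν (coeff ν I)) := by
      intro ν hν
      have hw : wt n ν ≤ N := le_trans (Finset.le_sup hν) hN
      rw [phi_monomial (∑ k : Fin (n+1), ν k) ν (coeff ν I) le_rfl]
      refine Finset.sum_subset (Finset.range_subset_range.mpr (by omega)) ?_
      intro i _ hi
      exact tt_eq_zero (Dpow_monomial_eq_zero i ν _ (by simp at hi; omega))
    conv_lhs => rw [I.as_sum]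
    rw [map_sum, Finset.sum_congr rfl key, Finset.sum_comm]
    refine Finset.sum_congr rfl fun i _ => ?_
    conv_rhs => rw [I.as_sum]
    simp only [tt, map_sum, Finset.mul_sum, Finset.smul_sum]
  · exact fun i hi => Dpow_eq_zero I i hi
end

section
/- Let n : ℕ and let I ∈ MvPolynomial (Fin (n+1)) ℚ. Then I is a semi-invariant with respect to the vertical shear transformation, i.e. ψ(I) = ι(I), if and only if Δ(I) = 0. -/
open MvPolynomial

-- Auxiliary setup
open Polynomial

local notation "B" n => MvPolynomial (Fin (n+1)) ℚ
local notation "A" n => MvPolynomial (Fin (n+1)) (Polynomial ℚ)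

def up (n : ℕ) (i : Fin (n+1)) (j : ℕ) : Fin (n+1) := ⟨min ((i : ℕ) + j) n, by omega⟩

noncomputable def Φr (n : ℕ) : (A n) →+* Polynomial (B n) :=
  eval₂Hom (Polynomial.mapRingHom (algebraMap ℚ (B n))) (fun i => Polynomial.C (MvPolynomial.X i))

noncomputable def Fr (n : ℕ) : (B n) →+* Polynomial (B n) :=
  (Φr n).comp (ψmap n).toRingHom

lemma psi_X (n : ℕ) (i : Fin (n+1)) :
    ψmap n (MvPolynomial.X i) = ∑ j ∈ Finset.range (n - (i : ℕ) + 1),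
      (MvPolynomial.C ((Nat.choose (n - (i : ℕ)) j : Polynomial ℚ) * Polynomial.X ^ j)) *
        MvPolynomial.X (up n i j) := by
  rw [ψmap, MvPolynomial.aeval_X]
  rw [← Finset.sum_attach (Finset.range (n - (i : ℕ) + 1)) (fun j =>
      (MvPolynomial.C ((Nat.choose (n - (i : ℕ)) j : Polynomial ℚ) * Polynomial.X ^ j)) *
        MvPolynomial.X (up n i j))]
  refine Finset.sum_congr rfl ?_
  rintro ⟨j, hj⟩ -
  have hj' := Finset.mem_range.mp hj
  congr 1
  · congr 1
    apply Fin.ext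
    simp [up]
    omega

lemma Fr_X (n : ℕ) (i : Fin (n+1)) :
    Fr n (MvPolynomial.X i) = ∑ j ∈ Finset.range (n - (i : ℕ) + 1),
      Polynomial.C ((Nat.choose (n - (i : ℕ)) j : MvPolynomial (Fin (n+1)) ℚ)
        * MvPolynomial.X (up n i j)) * Polynomial.X ^ j := by
  rw [Fr, RingHom.comp_apply, AlgHom.toRingHom_eq_coe, RingHom.coe_coe, psi_X, map_sum]
  refine Finset.sum_congr rfl fun j hj => ?_
  rw [map_mul, Φr, eval₂Hom_C, eval₂Hom_X']
  simp only [coe_mapRingHom, Polynomial.map_mul, Polynomial.map_natCast, Polynomial.map_pow,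
    Polynomial.map_X, map_mul]
  rw [Polynomial.C_eq_natCast]
  ring_nf

lemma Δop_C (n : ℕ) (a : ℚ) : Δop n (MvPolynomial.C a) = 0 := by
  simp [Δop, LinearMap.sum_apply, pderiv_C]

lemma Δop_mul (n : ℕ) (p q : MvPolynomial (Fin (n+1)) ℚ) :
    Δop n (p * q) = Δop n p * q + p * Δop n q := by
  simp only [Δop, LinearMap.sum_apply, LinearMap.smul_apply, LinearMap.coe_comp,
    Function.comp_apply, Derivation.coeFn_coe, LinearMap.mulLeft_apply,
    Derivation.leibniz, smul_eq_mul]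
  rw [Finset.sum_mul, Finset.mul_sum, ← Finset.sum_add_distrib]
  refine Finset.sum_congr rfl fun k _ => ?_
  rw [mul_add, smul_add, smul_mul_assoc, mul_smul_comm]
  ring_nf

lemma Δop_X_cast (n : ℕ) (k : Fin n) :
    Δop n (MvPolynomial.X k.castSucc) = ((n : ℚ) - (k : ℚ)) • MvPolynomial.X k.succ := by
  classical
  simp only [Δop, LinearMap.sum_apply, LinearMap.smul_apply, LinearMap.coe_comp,
    Function.comp_apply, Derivation.coeFn_coe, LinearMap.mulLeft_apply]
  rw [Finset.sum_eq_single k]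
  · rw [pderiv_X_self, mul_one]
  · intro b _ hb
    rw [pderiv_X_of_ne (fun h => hb (by simpa [Fin.ext_iff] using h.symm))]
    rw [mul_zero, smul_zero]
  · exact fun h => absurd (Finset.mem_univ k) h

lemma Δop_X_last (n : ℕ) :
    Δop n (MvPolynomial.X (Fin.last n)) = 0 := by
  classical
  simp only [Δop, LinearMap.sum_apply, LinearMap.smul_apply, LinearMap.coe_comp,
    Function.comp_apply, Derivation.coeFn_coe, LinearMap.mulLeft_apply]
  refine Finset.sum_eq_zero fun k _ => ?_
  rw [pderiv_X_of_ne (by simp only [ne_eq, Fin.ext_iff, Fin.val_last, Fin.coe_castSucc]; omega)]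
  rw [mul_zero, smul_zero]

lemma Fr_C (n : ℕ) (q : ℚ) :
    Fr n (MvPolynomial.C q) = Polynomial.C (MvPolynomial.C q) := by
  rw [Fr, RingHom.comp_apply, AlgHom.toRingHom_eq_coe, RingHom.coe_coe, ψmap, MvPolynomial.aeval_C]
  have : (algebraMap ℚ (MvPolynomial (Fin (n+1)) (Polynomial ℚ))) q
      = MvPolynomial.C (Polynomial.C q) := by
    simp [MvPolynomial.algebraMap_apply, Polynomial.algebraMap_eq]
  rw [this, Φr, eval₂Hom_C]
  simp

lemma key_X (n : ℕ) (i : Fin (n+1)) :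
    Polynomial.derivative (Fr n (MvPolynomial.X i)) = Fr n (Δop n (MvPolynomial.X i)) := by
  by_cases h : (i : ℕ) < n
  · set m := n - (i : ℕ) with hm
    have hm1 : m - 1 + 1 = m := by omega
    have hk : i = (⟨(i : ℕ), h⟩ : Fin n).castSucc := by apply Fin.ext; rfl
    rw [hk, Δop_X_cast, MvPolynomial.smul_eq_C_mul, map_mul]
    have hq : MvPolynomial.C ((n : ℚ) - ((⟨(i : ℕ), h⟩ : Fin n) : ℚ))
        = (m : MvPolynomial (Fin (n+1)) ℚ) := by
      have h2 : (n : ℚ) - ((⟨(i : ℕ), h⟩ : Fin n) : ℚ) = ((m : ℕ) : ℚ) := by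
        rw [hm, Nat.cast_sub (le_of_lt h)]
      rw [h2, map_natCast]
    rw [Fr_C, hq, Fr_X, Fr_X]
    simp only [Fin.coe_castSucc, Fin.val_succ]
    rw [derivative_sum]
    rw [Finset.sum_congr rfl (fun j _ => derivative_C_mul_X_pow _ j)]
    rw [Finset.sum_range_succ']
    simp only [Nat.cast_zero, mul_zero, map_zero, zero_mul, add_zero, Nat.add_sub_cancel]
    have hr2 : n - ((i : ℕ) + 1) + 1 = m := by omega
    rw [hr2, Finset.mul_sum]
    refine Finset.sum_congr rfl fun j hj => ?_
    have hup : up n (⟨(i : ℕ), h⟩ : Fin n).castSucc (j + 1) = up n (⟨(i : ℕ), h⟩ : Fin n).succ j := by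
      apply Fin.ext
      simp only [up, Fin.coe_castSucc, Fin.val_succ]
      omega
    have hnat : (m : ℕ) * Nat.choose (m - 1) j = Nat.choose m (j + 1) * (j + 1) := by
      have h3 := Nat.add_one_mul_choose_eq (m - 1) j
      rwa [hm1] at h3
    rw [hup, ← mul_assoc, ← Polynomial.C_mul]
    congr 1
    have hsub : n - ((i : ℕ) + 1) = m - 1 := by omega
    rw [hsub, mul_right_comm, ← Nat.cast_mul, ← hnat, Nat.cast_mul]
    ring_nf
  · have hi : i = Fin.last n := Fin.ext (by simp only [Fin.val_last]; omega)
    rw [hi, Δop_X_last, map_zero, Fr_X]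
    have h0 : n - ((Fin.last n : Fin (n+1)) : ℕ) = 0 := by simp
    rw [h0]
    simp

lemma key_deriv (n : ℕ) (p : MvPolynomial (Fin (n+1)) ℚ) :
    Polynomial.derivative (Fr n p) = Fr n (Δop n p) := by
  induction p using MvPolynomial.induction_on with
  | C a => rw [Fr_C, derivative_C, Δop_C, map_zero]
  | add p q hp hq => rw [map_add, derivative_add, hp, hq, LinearMap.map_add, map_add]
  | mul_X p i hp =>
      rw [Δop_mul, map_mul, derivative_mul, hp, key_X, map_add, map_mul, map_mul]

lemma eval0_Fr (n : ℕ) (p : MvPolynomial (Fin (n+1)) ℚ) :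
    Polynomial.eval 0 (Fr n p) = p := by
  induction p using MvPolynomial.induction_on with
  | C a => rw [Fr_C, Polynomial.eval_C]
  | add p q hp hq => rw [map_add, Polynomial.eval_add, hp, hq]
  | mul_X p i hp =>
      rw [map_mul, Polynomial.eval_mul, hp]
      congr 1
      rw [Fr_X, Polynomial.eval_finset_sum]
      rw [Finset.sum_eq_single 0]
      · have hup : up n i 0 = i := Fin.ext (by simp [up]; omega)
        simp [hup]
      · intro j _ hj
        simp [zero_pow hj]
      · intro hh
        exact absurd (Finset.mem_range.mpr (by omega)) hh

noncomputable def Ψr (n : ℕ) :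
    Polynomial (MvPolynomial (Fin (n+1)) ℚ) →+* MvPolynomial (Fin (n+1)) (Polynomial ℚ) :=
  Polynomial.eval₂RingHom (ιmap n) (MvPolynomial.C Polynomial.X)

lemma ΨΦ (n : ℕ) (p : MvPolynomial (Fin (n+1)) (Polynomial ℚ)) :
    Ψr n (Φr n p) = p := by
  induction p using MvPolynomial.induction_on with
  | C r =>
      rw [Φr, eval₂Hom_C]
      have hcomp : (ιmap n).comp (algebraMap ℚ (MvPolynomial (Fin (n+1)) ℚ))
          = (MvPolynomial.C : Polynomial ℚ →+* MvPolynomial (Fin (n+1)) (Polynomial ℚ)).comp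
              (Polynomial.C : ℚ →+* Polynomial ℚ) := by
        ext q
        simp [ιmap, MvPolynomial.algebraMap_eq]
      rw [Ψr, Polynomial.coe_eval₂RingHom, Polynomial.coe_mapRingHom, Polynomial.eval₂_map,
        hcomp]
      have := Polynomial.hom_eval₂ r (Polynomial.C : ℚ →+* Polynomial ℚ)
        (MvPolynomial.C : Polynomial ℚ →+* MvPolynomial (Fin (n+1)) (Polynomial ℚ)) Polynomial.X
      rw [← this, Polynomial.eval₂_C_X]
  | add p q hp hq => rw [map_add, map_add, hp, hq]
  | mul_X p i hp =>
      rw [map_mul, map_mul, hp, Φr, eval₂Hom_X']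
      congr 1
      rw [Ψr, Polynomial.coe_eval₂RingHom, Polynomial.eval₂_C, ιmap, MvPolynomial.map_X]

lemma Φι (n : ℕ) (p : MvPolynomial (Fin (n+1)) ℚ) :
    Φr n (ιmap n p) = Polynomial.C p := by
  induction p using MvPolynomial.induction_on with
  | C a =>
      rw [ιmap, MvPolynomial.map_C, Φr, eval₂Hom_C]
      simp [MvPolynomial.algebraMap_eq]
  | add p q hp hq => rw [map_add, map_add, hp, hq, map_add]
  | mul_X p i hp =>
      rw [map_mul, map_mul, hp, ιmap, MvPolynomial.map_X, Φr, eval₂Hom_X', ← Polynomial.C_mul]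


/-- `I` is a semi-invariant for the vertical shear iff `Δ(I) = 0`. -/
theorem vertical_semiInvariant_iff_Delta_eq_zero (n : ℕ) (I : MvPolynomial (Fin (n+1)) ℚ) :
    ψmap n I = ιmap n I ↔ Δop n I = 0 := by
  constructor
  · intro hinv
    have hF : Fr n I = Polynomial.C I := by
      show Φr n (ψmap n I) = Polynomial.C I
      rw [hinv, Φι]
    have h0 : Fr n (Δop n I) = 0 := by
      rw [← key_deriv, hF, derivative_C]
    have := eval0_Fr n (Δop n I)
    rw [h0, Polynomial.eval_zero] at this
    exact this.symm
  · intro hΔ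
    have hd : Polynomial.derivative (Fr n I) = 0 := by
      rw [key_deriv, hΔ, map_zero]
    have hC : Fr n I = Polynomial.C I := by
      have h1 := Polynomial.eq_C_of_derivative_eq_zero hd
      have h2 := eval0_Fr n I
      rw [h1, Polynomial.eval_C] at h2
      rw [h1, h2]
    calc ψmap n I = Ψr n (Φr n (ψmap n I)) := (ΨΦ n _).symm
      _ = Ψr n (Φr n (ιmap n I)) := by
          rw [show Φr n (ψmap n I) = Fr n I from rfl, hC, Φι]
      _ = ιmap n I := ΨΦ n _
end

section
/- (Cayley's relation.) Let n, k : ℕ and m : ℕ with 2m ≤ nk, and set c = nk − 2m (an integer ≥ 0). Let I ∈ Q_n(k,m) be a semi-invariant, i.e. D(I) = 0. Then for every i ≥ 1, D(Δ^i(I)) = i·(c − i + 1) · Δ^{i-1}(I), where the scalar i·(c − i + 1) is taken in ℚ (via the cast from ℤ). -/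
open MvPolynomial

/-! ### Auxiliary material for Cayley's relation -/

lemma pderiv_pderiv_comm' {σ : Type*} (i j : σ) (p : MvPolynomial σ ℚ) :
    pderiv i (pderiv j p) = pderiv j (pderiv i p) := by
  classical
  induction p using MvPolynomial.induction_on' with
  | add p q hp hq => simp [map_add, hp, hq]
  | monomial s a =>
    by_cases h : i = j
    · subst h; rfl
    · simp only [pderiv_monomial, Finsupp.tsub_apply,
        Finsupp.single_eq_of_ne' h, Finsupp.single_eq_of_ne' (Ne.symm h), Nat.sub_zero]
      rw [tsub_right_comm]
      ring_nf

/-- The operator `E(I) = Σ_t (n - 2t) · a_t · ∂I/∂a_t`, the commutator `[D, Δ]`. -/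
noncomputable def Eop (n : ℕ) :
    MvPolynomial (Fin (n+1)) ℚ →ₗ[ℚ] MvPolynomial (Fin (n+1)) ℚ :=
  ∑ t : Fin (n+1), ((n : ℚ) - 2*(t : ℚ)) •
    ((LinearMap.mulLeft ℚ (X t)).comp (pderiv t).toLinearMap)

lemma Dop_apply (n : ℕ) (p : MvPolynomial (Fin (n+1)) ℚ) :
    Dop n p = ∑ i : Fin n, ((i : ℚ) + 1) • (X i.castSucc * pderiv i.succ p) := by
  simp [Dop, LinearMap.sum_apply]

lemma Δop_apply (n : ℕ) (p : MvPolynomial (Fin (n+1)) ℚ) :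
    Δop n p = ∑ i : Fin n, ((n : ℚ) - (i : ℚ)) • (X i.succ * pderiv i.castSucc p) := by
  simp [Δop, LinearMap.sum_apply]

lemma Eop_apply (n : ℕ) (p : MvPolynomial (Fin (n+1)) ℚ) :
    Eop n p = ∑ t : Fin (n+1), ((n : ℚ) - 2*(t : ℚ)) • (X t * pderiv t p) := by
  simp [Eop, LinearMap.sum_apply]

lemma term_comm (n : ℕ) (a b : Fin n) (p : MvPolynomial (Fin (n+1)) ℚ) :
    X a.castSucc * pderiv a.succ (X b.succ * pderiv b.castSucc p)
      - X b.succ * pderiv b.castSucc (X a.castSucc * pderiv a.succ p)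
    = if a = b then X a.castSucc * pderiv a.castSucc p - X a.succ * pderiv a.succ p else 0 := by
  rw [pderiv_mul, pderiv_mul]
  by_cases h : a = b
  · subst h
    rw [if_pos rfl, pderiv_X_self, pderiv_X_self, pderiv_pderiv_comm']
    ring
  · have h1 : pderiv a.succ (X b.succ : MvPolynomial (Fin (n+1)) ℚ) = 0 :=
      pderiv_X_of_ne (by simpa [Fin.succ_inj] using Ne.symm h)
    have h2 : pderiv b.castSucc (X a.castSucc : MvPolynomial (Fin (n+1)) ℚ) = 0 :=
      pderiv_X_of_ne (by simpa [Fin.castSucc_inj] using h)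
    rw [if_neg h, h1, h2, pderiv_pderiv_comm']
    ring

lemma comm_apply (n : ℕ) (p : MvPolynomial (Fin (n+1)) ℚ) :
    Dop n (Δop n p) = Δop n (Dop n p) + Eop n p := by
  have hL : Dop n (Δop n p) = ∑ i : Fin n, ∑ j : Fin n,
      (((i : ℚ) + 1) * ((n : ℚ) - (j : ℚ))) •
        (X i.castSucc * pderiv i.succ (X j.succ * pderiv j.castSucc p)) := by
    rw [Dop_apply, Δop_apply]
    refine Finset.sum_congr rfl fun i _ => ?_
    rw [map_sum, Finset.mul_sum, Finset.smul_sum]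
    refine Finset.sum_congr rfl fun j _ => ?_
    rw [Derivation.map_smul, mul_smul_comm, smul_smul]
  have hR : Δop n (Dop n p) = ∑ j : Fin n, ∑ i : Fin n,
      (((i : ℚ) + 1) * ((n : ℚ) - (j : ℚ))) •
        (X j.succ * pderiv j.castSucc (X i.castSucc * pderiv i.succ p)) := by
    rw [Δop_apply, Dop_apply]
    refine Finset.sum_congr rfl fun j _ => ?_
    rw [map_sum, Finset.mul_sum, Finset.smul_sum]
    refine Finset.sum_congr rfl fun i _ => ?_
    rw [Derivation.map_smul, mul_smul_comm, smul_smul, mul_comm (((n:ℚ) - (j:ℚ)))]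
  have key : Dop n (Δop n p) - Δop n (Dop n p)
      = ∑ i : Fin n, (((i : ℚ) + 1) * ((n : ℚ) - (i : ℚ))) •
          (X i.castSucc * pderiv i.castSucc p - X i.succ * pderiv i.succ p) := by
    rw [Finset.sum_comm] at hR
    rw [hL, hR, ← Finset.sum_sub_distrib]
    refine Finset.sum_congr rfl fun i _ => ?_
    rw [← Finset.sum_sub_distrib]
    have e : ∀ j : Fin n, (((i : ℚ) + 1) * ((n : ℚ) - (j : ℚ))) •
        (X i.castSucc * pderiv i.succ (X j.succ * pderiv j.castSucc p))
        - (((i : ℚ) + 1) * ((n : ℚ) - (j : ℚ))) •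
        (X j.succ * pderiv j.castSucc (X i.castSucc * pderiv i.succ p))
        = if j = i then (((i : ℚ) + 1) * ((n : ℚ) - (i : ℚ))) •
            (X i.castSucc * pderiv i.castSucc p - X i.succ * pderiv i.succ p) else 0 := by
      intro j
      rw [← smul_sub, term_comm]
      by_cases h : i = j
      · subst h; simp
      · rw [if_neg h, if_neg (Ne.symm h), smul_zero]
    rw [Finset.sum_congr rfl fun j _ => e j, Finset.sum_ite_eq', if_pos (Finset.mem_univ i)]
  have tele : ∑ i : Fin n, (((i : ℚ) + 1) * ((n : ℚ) - (i : ℚ))) •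
          (X i.castSucc * pderiv i.castSucc p - X i.succ * pderiv i.succ p) = Eop n p := by
    rw [Eop_apply]
    set g : Fin (n+1) → MvPolynomial (Fin (n+1)) ℚ := fun t => X t * pderiv t p with hg
    have e1 : ∑ i : Fin n, (((i : ℚ) + 1) * ((n : ℚ) - (i : ℚ))) • g i.castSucc
        = ∑ t : Fin (n+1), (((t : ℚ) + 1) * ((n : ℚ) - (t : ℚ))) • g t := by
      rw [Fin.sum_univ_castSucc (f := fun t : Fin (n+1) => (((t : ℚ) + 1) * ((n : ℚ) - (t : ℚ))) • g t)]
      simp [Fin.coe_castSucc, Fin.val_last]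
    have e2 : ∑ i : Fin n, (((i : ℚ) + 1) * ((n : ℚ) - (i : ℚ))) • g i.succ
        = ∑ t : Fin (n+1), ((t : ℚ) * ((n : ℚ) - (t : ℚ) + 1)) • g t := by
      rw [Fin.sum_univ_succ (f := fun t : Fin (n+1) => ((t : ℚ) * ((n : ℚ) - (t : ℚ) + 1)) • g t)]
      simp only [Fin.val_succ, Fin.val_zero, Nat.cast_zero, zero_mul, zero_smul, zero_add]
      refine Finset.sum_congr rfl fun i _ => ?_
      push_cast
      ring_nf
    calc ∑ i : Fin n, (((i : ℚ) + 1) * ((n : ℚ) - (i : ℚ))) • (g i.castSucc - g i.succ)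
        = ∑ i : Fin n, ((((i : ℚ) + 1) * ((n : ℚ) - (i : ℚ))) • g i.castSucc
            - (((i : ℚ) + 1) * ((n : ℚ) - (i : ℚ))) • g i.succ) := by
          refine Finset.sum_congr rfl fun i _ => smul_sub _ _ _
      _ = ∑ t : Fin (n+1), ((((t : ℚ) + 1) * ((n : ℚ) - (t : ℚ))) - ((t : ℚ) * ((n : ℚ) - (t : ℚ) + 1))) • g t := by
          rw [Finset.sum_sub_distrib, e1, e2, ← Finset.sum_sub_distrib]
          exact Finset.sum_congr rfl fun t _ => (sub_smul _ _ _).symm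
      _ = ∑ t : Fin (n+1), ((n : ℚ) - 2*(t : ℚ)) • g t := by
          refine Finset.sum_congr rfl fun t _ => ?_
          congr 1; ring
  rw [tele] at key
  exact sub_eq_iff_eq_add'.mp key

lemma X_mul_monomial' {n : ℕ} (t : Fin (n+1)) (s : Fin (n+1) →₀ ℕ) (c : ℚ) :
    (X t : MvPolynomial (Fin (n+1)) ℚ) * monomial s c
      = monomial (Finsupp.single t 1 + s) c := by
  rw [X, monomial_mul, one_mul]

lemma X_mul_pderiv_monomial {n : ℕ} (t : Fin (n+1)) (ν : Fin (n+1) →₀ ℕ) :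
    (X t : MvPolynomial (Fin (n+1)) ℚ) * pderiv t (monomial ν 1)
      = (ν t : ℚ) • monomial ν 1 := by
  rw [pderiv_monomial, X_mul_monomial', smul_monomial, smul_eq_mul, mul_one, one_mul]
  by_cases h : ν t = 0
  · rw [h]; simp
  · have hsupp : Finsupp.single t 1 + (ν - Finsupp.single t 1) = ν := by
      ext s
      rw [Finsupp.add_apply, Finsupp.tsub_apply]
      rcases eq_or_ne s t with rfl | hs
      · simp only [Finsupp.single_eq_same]; omega
      · simp only [Finsupp.single_eq_of_ne' (Ne.symm hs)]; omega
    rw [hsupp]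

lemma Eop_eigen (n k m : ℕ) (p : MvPolynomial (Fin (n+1)) ℚ) (hp : p ∈ Qspace n k m) :
    Eop n p = ((n : ℚ) * k - 2 * m) • p := by
  refine Submodule.span_induction (fun q hq => ?_) (by simp) (fun x y _ _ hx hy => ?_)
    (fun a x _ hx => ?_) hp
  · obtain ⟨ν, hk, hm, rfl⟩ := hq
    rw [Eop_apply]
    have e : ∀ t : Fin (n+1), ((n : ℚ) - 2*(t : ℚ)) • ((X t : MvPolynomial (Fin (n+1)) ℚ) * pderiv t (monomial ν 1))
        = (((n : ℚ) - 2*(t : ℚ)) * (ν t : ℚ)) • monomial ν 1 := by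
      intro t; rw [X_mul_pderiv_monomial, smul_smul]
    rw [Finset.sum_congr rfl fun t _ => e t, ← Finset.sum_smul]
    congr 1
    have hk' : (∑ i : Fin (n+1), ((ν i : ℚ))) = (k : ℚ) := by
      rw [← hk]; push_cast; rfl
    have hm' : (∑ i : Fin (n+1), ((i : ℚ) * (ν i : ℚ))) = (m : ℚ) := by
      rw [← hm]; push_cast; rfl
    calc ∑ t : Fin (n+1), ((n : ℚ) - 2*(t : ℚ)) * (ν t : ℚ)
        = (n : ℚ) * (∑ t : Fin (n+1), (ν t : ℚ)) - 2 * (∑ t : Fin (n+1), (t : ℚ) * (ν t : ℚ)) := by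
          rw [Finset.mul_sum, Finset.mul_sum, ← Finset.sum_sub_distrib]
          exact Finset.sum_congr rfl fun t _ => by ring
      _ = (n : ℚ) * k - 2 * m := by rw [hk', hm']
  · rw [map_add, hx, hy, smul_add]
  · rw [map_smul, hx, smul_comm]

lemma Δop_mem (n k m : ℕ) (p : MvPolynomial (Fin (n+1)) ℚ) (hp : p ∈ Qspace n k m) :
    Δop n p ∈ Qspace n k (m+1) := by
  refine Submodule.span_induction (fun q hq => ?_) (by simp) (fun x y _ _ hx hy => ?_)
    (fun a x _ hx => ?_) hp
  · obtain ⟨ν, hk, hm, rfl⟩ := hq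
    rw [Δop_apply]
    refine Submodule.sum_mem _ fun j _ => Submodule.smul_mem _ _ ?_
    have e : (X j.succ : MvPolynomial (Fin (n+1)) ℚ) * pderiv j.castSucc (monomial ν 1)
        = monomial (Finsupp.single j.succ 1 + (ν - Finsupp.single j.castSucc 1))
            ((ν j.castSucc : ℚ)) := by
      rw [pderiv_monomial, X_mul_monomial', one_mul]
    rw [e]
    by_cases h0 : ν j.castSucc = 0
    · rw [h0]; simp only [Nat.cast_zero, monomial_zero]; exact Submodule.zero_mem _
    · set ν' : Fin (n+1) →₀ ℕ := Finsupp.single j.succ 1 + (ν - Finsupp.single j.castSucc 1) with hν'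
      have hne : j.castSucc ≠ j.succ := (Fin.castSucc_lt_succ : j.castSucc < j.succ).ne
      have key : ∀ t : Fin (n+1), (ν' t : ℤ) = (ν t : ℤ)
          + (if t = j.succ then 1 else 0) - (if t = j.castSucc then 1 else 0) := by
        intro t
        rw [hν', Finsupp.add_apply, Finsupp.tsub_apply]
        by_cases h1 : t = j.succ
        · subst h1
          simp only [Finsupp.single_eq_same, Finsupp.single_eq_of_ne' hne,
            if_pos rfl, if_neg (Ne.symm hne), if_true]
          omega
        · by_cases h2 : t = j.castSucc
          · subst h2
            simp only [Finsupp.single_eq_of_ne' (Ne.symm h1), Finsupp.single_eq_same,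
              if_neg h1, if_pos rfl, if_true]
            omega
          · simp only [Finsupp.single_eq_of_ne' (Ne.symm h1), Finsupp.single_eq_of_ne' (Ne.symm h2),
              if_neg h1, if_neg h2]
            omega
      have hdegZ : (∑ i : Fin (n+1), (ν' i : ℤ)) = ∑ i : Fin (n+1), (ν i : ℤ) := by
        simp only [key, Finset.sum_sub_distrib, Finset.sum_add_distrib,
          Finset.sum_ite_eq', Finset.mem_univ, if_pos]
        ring
      have hdeg : (∑ i : Fin (n+1), ν' i) = k := by
        have h2 : ((∑ i : Fin (n+1), ν' i : ℕ) : ℤ) = ((∑ i : Fin (n+1), ν i : ℕ) : ℤ) := by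
          push_cast; exact hdegZ
        rw [hk] at h2; exact_mod_cast h2
      have hwtZ : (∑ i : Fin (n+1), ((i : ℕ) : ℤ) * (ν' i : ℤ))
          = (∑ i : Fin (n+1), ((i : ℕ) : ℤ) * (ν i : ℤ)) + 1 := by
        have expand : ∀ t : Fin (n+1), ((t : ℕ) : ℤ) * (ν' t : ℤ)
            = ((t : ℕ) : ℤ) * (ν t : ℤ) + (if t = j.succ then ((t : ℕ) : ℤ) else 0)
              - (if t = j.castSucc then ((t : ℕ) : ℤ) else 0) := by
          intro t
          rw [key t]
          by_cases h1 : t = j.succ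
          · rw [if_pos h1, if_pos h1, if_neg (h1 ▸ Ne.symm hne), if_neg (h1 ▸ Ne.symm hne)]; ring
          · by_cases h2 : t = j.castSucc
            · rw [if_neg h1, if_neg h1, if_pos h2, if_pos h2]; ring
            · rw [if_neg h1, if_neg h1, if_neg h2, if_neg h2]; ring
        simp only [expand, Finset.sum_sub_distrib, Finset.sum_add_distrib,
          Finset.sum_ite_eq', Finset.mem_univ, if_pos, Fin.val_succ, Fin.coe_castSucc]
        push_cast
        ring
      have hwt : (∑ i : Fin (n+1), (i : ℕ) * ν' i) = m + 1 := by
        have h2 : ((∑ i : Fin (n+1), (i : ℕ) * ν' i : ℕ) : ℤ)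
            = ((∑ i : Fin (n+1), (i : ℕ) * ν i : ℕ) : ℤ) + 1 := by
          push_cast; exact hwtZ
        rw [hm] at h2; exact_mod_cast h2
      have e2 : (monomial ν' ((ν j.castSucc : ℚ)) : MvPolynomial (Fin (n+1)) ℚ)
          = (ν j.castSucc : ℚ) • monomial ν' 1 := by rw [smul_monomial, smul_eq_mul, mul_one]
      rw [e2]
      exact Submodule.smul_mem _ _ (Submodule.subset_span ⟨ν', hdeg, hwt, rfl⟩)
  · rw [map_add]; exact Submodule.add_mem _ hx hy
  · rw [map_smul]; exact Submodule.smul_mem _ _ hx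

lemma cayley_aux (n k m : ℕ) (I : MvPolynomial (Fin (n+1)) ℚ)
    (hI : I ∈ Qspace n k m) (hD : Dop n I = 0) :
    ∀ j : ℕ, (Δop n ^ j) I ∈ Qspace n k (m + j) ∧
      Dop n ((Δop n ^ j) I)
        = ((j : ℚ) * (((n : ℚ) * k - 2 * m) - j + 1)) • (Δop n ^ (j - 1)) I := by
  intro j
  induction j with
  | zero => exact ⟨by simpa using hI, by simp [hD]⟩
  | succ j ih =>
    have hstep : (Δop n ^ (j+1)) I = Δop n ((Δop n ^ j) I) := by
      rw [pow_succ', Module.End.mul_apply]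
    have hmem : (Δop n ^ (j+1)) I ∈ Qspace n k (m + (j+1)) := by
      rw [hstep]
      exact Δop_mem n k (m+j) _ ih.1
    refine ⟨hmem, ?_⟩
    rw [hstep, comm_apply, ih.2, map_smul, Eop_eigen n k (m+j) _ ih.1]
    by_cases hj : j = 0
    · subst hj
      simp only [Nat.cast_zero, zero_mul, zero_smul, smul_zero, zero_add, pow_zero,
        Module.End.one_apply, Nat.add_sub_cancel, pow_one]
      congr 1
      push_cast
      ring
    · have hj1 : j - 1 + 1 = j := Nat.succ_pred_eq_of_pos (Nat.pos_of_ne_zero hj)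
      have hΔ : Δop n ((Δop n ^ (j-1)) I) = (Δop n ^ j) I := by
        rw [← Module.End.mul_apply, ← pow_succ', hj1]
      rw [hΔ, ← add_smul, Nat.add_sub_cancel]
      congr 1
      push_cast
      ring

/-- Cayley's relation `D Δ^i (I) = i (c - i + 1) Δ^{i-1} (I)` for a
semi-invariant `I` of degree `k` and weight `m`, where `c = nk - 2m`. -/
theorem cayley_relation (n k m : ℕ) (h : 2 * m ≤ n * k)
    (I : MvPolynomial (Fin (n+1)) ℚ) (hI : I ∈ Qspace n k m) (hD : Dop n I = 0)
    (i : ℕ) (hi : 1 ≤ i) :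
    Dop n ((Δop n ^ i) I) =
      (((i : ℤ) * (((n : ℤ) * k - 2 * m) - i + 1) : ℤ) : ℚ) • (Δop n ^ (i - 1)) I := by
  obtain ⟨_, h2⟩ := cayley_aux n k m I hI hD i
  rw [h2]
  congr 1
  push_cast
  ring
end

section
/- (Hilbert's identity.) Let n, k : ℕ, let m : ℕ with m ≤ nk, let λ = (λ_1 ≥ ⋯ ≥ λ_k ≥ 0) be a partition of m with λ_1 ≤ n, and set c = nk − 2m ∈ ℤ. Then for every i ≥ 1, D(Δ^i(a_λ)) − Δ^i(D(a_λ)) = i·(c − i + 1) · Δ^{i-1}(a_λ), where the scalar i·(c − i + 1) is taken in ℚ via the cast from ℤ. -/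
open MvPolynomial

lemma der_sum_apply {ι A : Type*} [CommRing A] [Algebra ℚ A] (s : Finset ι)
    (D : ι → Derivation ℚ A A) (a : A) :
    (∑ i ∈ s, D i) a = ∑ i ∈ s, D i a := by
  induction s using Finset.cons_induction with
  | empty => simp
  | cons i s hi ih => simp [Finset.sum_cons, Derivation.add_apply, ih]

noncomputable def Dder (n : ℕ) :
    Derivation ℚ (MvPolynomial (Fin (n+1)) ℚ) (MvPolynomial (Fin (n+1)) ℚ) :=
  ∑ i : Fin n, ((((i : ℚ) + 1) • X i.castSucc : MvPolynomial (Fin (n+1)) ℚ)) • pderiv i.succ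

noncomputable def Δder (n : ℕ) :
    Derivation ℚ (MvPolynomial (Fin (n+1)) ℚ) (MvPolynomial (Fin (n+1)) ℚ) :=
  ∑ i : Fin n, ((((n : ℚ) - (i : ℚ)) • X i.succ : MvPolynomial (Fin (n+1)) ℚ)) • pderiv i.castSucc

lemma Dop_eq_der (n : ℕ) (p : MvPolynomial (Fin (n+1)) ℚ) : Dop n p = Dder n p := by
  rw [Dder, der_sum_apply]
  simp [Dop, LinearMap.sum_apply, Finset.sum_apply, Derivation.smul_apply, smul_smul,
    smul_mul_assoc, mul_comm]

lemma Δop_eq_der (n : ℕ) (p : MvPolynomial (Fin (n+1)) ℚ) : Δop n p = Δder n p := by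
  rw [Δder, der_sum_apply]
  simp [Δop, LinearMap.sum_apply, Finset.sum_apply, Derivation.smul_apply, smul_smul,
    smul_mul_assoc, mul_comm]

lemma Dder_X_succ (n : ℕ) (i : Fin n) :
    Dder n (X i.succ) = ((i : ℚ) + 1) • X i.castSucc := by
  rw [Dder, der_sum_apply, Finset.sum_eq_single i]
  · simp [Derivation.smul_apply, pderiv_X_self]
  · intro b _ hb
    rw [Derivation.smul_apply, pderiv_X_of_ne (fun h => hb (Fin.succ_injective _ h).symm),
      smul_zero]
  · exact fun h => absurd (Finset.mem_univ i) h

lemma Dder_X_zero (n : ℕ) : Dder n (X (0 : Fin (n+1))) = 0 := by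
  rw [Dder, der_sum_apply, Finset.sum_eq_zero]
  intro b _
  rw [Derivation.smul_apply, pderiv_X_of_ne, smul_zero]
  exact fun h => (Fin.succ_ne_zero b) h.symm

lemma Δder_X_castSucc (n : ℕ) (i : Fin n) :
    Δder n (X i.castSucc) = ((n : ℚ) - (i : ℚ)) • X i.succ := by
  rw [Δder, der_sum_apply, Finset.sum_eq_single i]
  · simp [Derivation.smul_apply, pderiv_X_self]
  · intro b _ hb
    rw [Derivation.smul_apply, pderiv_X_of_ne (fun h => hb (Fin.castSucc_injective _ h).symm),
      smul_zero]
  · exact fun h => absurd (Finset.mem_univ i) h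

lemma Δder_X_last (n : ℕ) : Δder n (X (Fin.last n)) = 0 := by
  rw [Δder, der_sum_apply, Finset.sum_eq_zero]
  intro b _
  rw [Derivation.smul_apply, pderiv_X_of_ne, smul_zero]
  exact fun h => absurd (congrArg Fin.val h) (by simp [Fin.val_last]; omega)

noncomputable def Hder (n : ℕ) :
    Derivation ℚ (MvPolynomial (Fin (n+1)) ℚ) (MvPolynomial (Fin (n+1)) ℚ) :=
  mkDerivation ℚ (fun j : Fin (n+1) => ((n : ℚ) - 2 * ((j : ℕ) : ℚ)) • X j)

lemma bracket_eq (n : ℕ) : ⁅Dder n, Δder n⁆ = Hder n := by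
  apply derivation_ext
  intro j
  rw [Derivation.commutator_apply, Hder, mkDerivation_X]
  induction j using Fin.lastCases with
  | last =>
    rw [Δder_X_last, map_zero]
    match n with
    | 0 =>
      have h0 : Fin.last 0 = (0 : Fin 1) := rfl
      rw [h0, Dder_X_zero, map_zero]
      simp
    | Nat.succ n =>
      have h1 : Fin.last (n+1) = (⟨n, n.lt_succ_self⟩ : Fin (n+1)).succ := rfl
      rw [h1, Dder_X_succ, Derivation.map_smul, Δder_X_castSucc, ← h1]
      simp only [Fin.val_mk, Fin.val_last]
      push_cast
      module
  | cast i =>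
    rw [Δder_X_castSucc, Derivation.map_smul, Dder_X_succ]
    rcases Nat.eq_zero_or_eq_succ_pred (i : ℕ) with h | h
    · have h0 : i.castSucc = (0 : Fin (n+1)) := Fin.ext (by simpa using h)
      rw [h0, Dder_X_zero, map_zero]
      have hq : ((i : ℕ) : ℚ) = 0 := by exact_mod_cast h
      rw [← h0]
      simp only [Fin.coe_castSucc, hq]
      module
    · set v := (i : ℕ) - 1 with hv
      have hvlt : v < n := by omega
      have h' : (i : ℕ) = v + 1 := by omega
      have hsucc : i.castSucc = (⟨v, hvlt⟩ : Fin n).succ := by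
        apply Fin.ext
        simp only [Fin.coe_castSucc, Fin.val_succ, Fin.val_mk]
        omega
      rw [hsucc, Dder_X_succ, Derivation.map_smul, Δder_X_castSucc]
      have hq : ((i : ℕ) : ℚ) = (v : ℚ) + 1 := by exact_mod_cast h'
      simp only [Fin.val_mk, Fin.coe_castSucc, Fin.val_succ, hq]
      push_cast
      module

lemma Dop_Δop_comm (n : ℕ) (p : MvPolynomial (Fin (n+1)) ℚ) :
    Dop n (Δop n p) - Δop n (Dop n p) = Hder n p := by
  rw [Dop_eq_der, Δop_eq_der, Δop_eq_der, Dop_eq_der, ← Derivation.commutator_apply, bracket_eq]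

lemma Hder_monomial (n : ℕ) (ν : Fin (n+1) →₀ ℕ) :
    Hder n (monomial ν (1:ℚ)) =
      (∑ i : Fin (n+1), ((n : ℚ) - 2 * ((i : ℕ) : ℚ)) * (ν i : ℚ)) • monomial ν (1:ℚ) := by
  classical
  rw [Hder, mkDerivation_monomial, one_smul, Finsupp.sum,
    Finset.sum_subset (Finset.subset_univ ν.support), Finset.sum_smul]
  · refine Finset.sum_congr rfl fun i _ => ?_
    by_cases hi : ν i = 0
    · simp [hi]
    · have hle : Finsupp.single i 1 ≤ ν := by
        rwa [Finsupp.single_le_iff, Nat.one_le_iff_ne_zero]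
      rw [smul_comm, smul_eq_mul, X, monomial_mul, mul_one,
        tsub_add_cancel_of_le hle, mul_smul]
      simp [smul_monomial, smul_comm]
  · intro i _ hi
    have : ν i = 0 := Finsupp.notMem_support_iff.mp hi
    simp [this]

lemma weight_eq_sum (n : ℕ) (w : Fin (n+1) → ℕ) (ν : Fin (n+1) →₀ ℕ) :
    Finsupp.weight w ν = ∑ i : Fin (n+1), ν i * w i := by
  rw [Finsupp.weight_apply, Finsupp.sum_fintype]
  · simp [smul_eq_mul]
  · intro i; simp

lemma Hder_homog (n k m : ℕ) (p : MvPolynomial (Fin (n+1)) ℚ)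
    (h1 : IsWeightedHomogeneous (fun _ : Fin (n+1) => 1) p k)
    (h2 : IsWeightedHomogeneous (fun i : Fin (n+1) => (i : ℕ)) p m) :
    Hder n p = ((n : ℚ) * k - 2 * m) • p := by
  conv_lhs => rw [p.as_sum]
  rw [map_sum]
  conv_rhs => rw [p.as_sum, Finset.smul_sum]
  refine Finset.sum_congr rfl fun ν hν => ?_
  have hc : coeff ν p ≠ 0 := mem_support_iff.mp hν
  have e1 := h1 hc
  have e2 := h2 hc
  rw [weight_eq_sum] at e1 e2
  have hk : (∑ i : Fin (n+1), (ν i : ℚ)) = k := by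
    have := congrArg (Nat.cast : ℕ → ℚ) e1
    push_cast at this
    simpa using this
  have hm : (∑ i : Fin (n+1), ((i : ℕ) : ℚ) * (ν i : ℚ)) = m := by
    have := congrArg (Nat.cast : ℕ → ℚ) e2
    push_cast at this
    rw [← this]
    exact Finset.sum_congr rfl fun i _ => by ring
  have hmono : monomial ν (coeff ν p) = (coeff ν p) • monomial ν (1:ℚ) := by
    rw [smul_monomial, smul_eq_mul, mul_one]
  rw [hmono, Derivation.map_smul, Hder_monomial, smul_comm]
  congr 1
  have expand : ∑ i : Fin (n+1), ((n:ℚ) - 2*((i:ℕ):ℚ))*(ν i : ℚ)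
      = (n:ℚ) * (∑ i : Fin (n+1), (ν i:ℚ)) - 2 * ∑ i : Fin (n+1), ((i:ℕ):ℚ)*(ν i:ℚ) := by
    rw [Finset.mul_sum, Finset.mul_sum, ← Finset.sum_sub_distrib]
    exact Finset.sum_congr rfl fun i _ => by ring
  rw [expand, hk, hm]

lemma hom_mul_pderiv {n : ℕ} (w : Fin (n+1) → ℕ) (a b : Fin (n+1)) (d m : ℕ)
    (hd : w a = w b + d) (p : MvPolynomial (Fin (n+1)) ℚ)
    (hp : IsWeightedHomogeneous w p m) :
    IsWeightedHomogeneous w (X a * pderiv b p) (m + d) := by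
  classical
  have : X a * pderiv b p = ∑ ν ∈ p.support, X a * pderiv b (monomial ν (coeff ν p)) := by
    rw [← Finset.mul_sum, ← map_sum, ← p.as_sum]
  rw [this]
  apply IsWeightedHomogeneous.sum
  intro ν hν
  rw [pderiv_monomial]
  by_cases hb : ν b = 0
  · simp only [hb, Nat.cast_zero, mul_zero, map_zero, MulZeroClass.mul_zero]
    exact isWeightedHomogeneous_zero ℚ w _
  · have hle : Finsupp.single b 1 ≤ ν := by
      rwa [Finsupp.single_le_iff, Nat.one_le_iff_ne_zero]
    rw [X, monomial_mul, one_mul]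
    apply isWeightedHomogeneous_monomial
    have hν' : Finsupp.weight w ν = m := hp (mem_support_iff.mp hν)
    have hsplit : Finsupp.weight w (ν - Finsupp.single b 1) + w b = m := by
      rw [← hν']
      conv_rhs => rw [show ν = (ν - Finsupp.single b 1) + Finsupp.single b 1 from
        (tsub_add_cancel_of_le hle).symm]
      rw [map_add]
      congr 1
      rw [Finsupp.weight_apply, Finsupp.sum_single_index]
      · simp
      · simp
    rw [map_add]
    have hwa : Finsupp.weight w (Finsupp.single a 1) = w a := by
      rw [Finsupp.weight_apply, Finsupp.sum_single_index]
      · simp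
      · simp
    rw [hwa]
    omega

lemma Δop_homog (n d : ℕ) (w : Fin (n+1) → ℕ)
    (hw : ∀ i : Fin n, w i.succ = w i.castSucc + d) (m : ℕ)
    (p : MvPolynomial (Fin (n+1)) ℚ) (hp : IsWeightedHomogeneous w p m) :
    IsWeightedHomogeneous w (Δop n p) (m + d) := by
  rw [Δop]
  simp only [LinearMap.sum_apply, LinearMap.smul_apply, LinearMap.coe_comp,
    Function.comp_apply, LinearMap.mulLeft_apply, Derivation.coeFn_coe]
  apply IsWeightedHomogeneous.sum
  intro i _
  have h := hom_mul_pderiv w i.succ i.castSucc d m (hw i) p hp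
  exact (mem_weightedHomogeneousSubmodule ℚ w _ _).mp
    ((weightedHomogeneousSubmodule ℚ w (m+d)).smul_mem _
      ((mem_weightedHomogeneousSubmodule ℚ w _ _).mpr h))


/-- Hilbert's identity
`D Δ^i (a_λ) - Δ^i D (a_λ) = i (c - i + 1) Δ^{i-1} (a_λ)` with `c = nk - 2m`,
for a partition `λ` of `m` contained in a `k × n` rectangle. -/
theorem hilbert_identity (n k m : ℕ) (hm : m ≤ n * k)
    (l : Fin k → ℕ) (hanti : ∀ j j' : Fin k, j ≤ j' → l j' ≤ l j)
    (hle : ∀ j, l j ≤ n) (hsum : ∑ j, l j = m)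
    (aLam : MvPolynomial (Fin (n+1)) ℚ)
    (haLam : aLam = ∏ j : Fin k, X (⟨l j, Nat.lt_succ_of_le (hle j)⟩ : Fin (n+1)))
    (i : ℕ) (hi : 1 ≤ i) :
    Dop n ((Δop n ^ i) aLam) - (Δop n ^ i) (Dop n aLam) =
      (((i : ℤ) * (((n : ℤ) * k - 2 * m) - i + 1) : ℤ) : ℚ) • (Δop n ^ (i - 1)) aLam := by
  have h1 : IsWeightedHomogeneous (fun _ : Fin (n+1) => 1) aLam k := by
    rw [haLam]
    have := IsWeightedHomogeneous.prod Finset.univ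
      (fun j : Fin k => X (⟨l j, Nat.lt_succ_of_le (hle j)⟩ : Fin (n+1)))
      (fun _ => 1) (w := fun _ : Fin (n+1) => 1)
      (fun j _ => isWeightedHomogeneous_X ℚ _ _)
    simpa using this
  have h2 : IsWeightedHomogeneous (fun i : Fin (n+1) => (i : ℕ)) aLam m := by
    rw [haLam]
    have := IsWeightedHomogeneous.prod Finset.univ
      (fun j : Fin k => X (⟨l j, Nat.lt_succ_of_le (hle j)⟩ : Fin (n+1)))
      (fun j => l j) (w := fun i : Fin (n+1) => (i : ℕ))
      (fun j _ => isWeightedHomogeneous_X ℚ _ _)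
    rw [hsum] at this
    exact this
  have hpow : ∀ j : ℕ,
      IsWeightedHomogeneous (fun _ : Fin (n+1) => 1) ((Δop n ^ j) aLam) k ∧
      IsWeightedHomogeneous (fun i : Fin (n+1) => (i : ℕ)) ((Δop n ^ j) aLam) (m + j) := by
    intro j
    induction j with
    | zero => simpa using ⟨h1, h2⟩
    | succ j ih =>
      rw [pow_succ', Module.End.mul_apply]
      constructor
      · have := Δop_homog n 0 _ (fun i => by simp) k _ ih.1
        simpa using this
      · have := Δop_homog n 1 _ (fun i => by simp [Fin.val_succ]) (m + j) _ ih.2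
        rw [show m + (j + 1) = m + j + 1 from by ring]
        exact this
  have key : ∀ j : ℕ, Dop n (Δop n ((Δop n ^ j) aLam)) - Δop n (Dop n ((Δop n ^ j) aLam)) =
      ((n : ℚ) * k - 2 * m - 2 * j) • (Δop n ^ j) aLam := by
    intro j
    rw [Dop_Δop_comm, Hder_homog n k (m + j) _ (hpow j).1 (hpow j).2]
    congr 1
    push_cast
    ring
  have main : ∀ i : ℕ, 1 ≤ i → Dop n ((Δop n ^ i) aLam) - (Δop n ^ i) (Dop n aLam) =
      ((i : ℚ) * (((n : ℚ) * k - 2 * m) - i + 1)) • (Δop n ^ (i - 1)) aLam := by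
    intro i hi
    induction i, hi using Nat.le_induction with
    | base =>
      have h0 := key 0
      rw [pow_zero, Module.End.one_apply] at h0
      rw [pow_one, h0, pow_zero, Module.End.one_apply]
      congr 1
      push_cast
      ring
    | succ i hi ih =>
      have e1 : (Δop n ^ (i+1)) aLam = Δop n ((Δop n ^ i) aLam) := by
        rw [pow_succ', Module.End.mul_apply]
      have e1' : (Δop n ^ (i+1)) (Dop n aLam) = Δop n ((Δop n ^ i) (Dop n aLam)) := by
        rw [pow_succ', Module.End.mul_apply]
      rw [e1, e1']
      have hkey : Dop n (Δop n ((Δop n ^ i) aLam)) =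
          Δop n (Dop n ((Δop n ^ i) aLam)) +
            ((n : ℚ) * k - 2 * m - 2 * i) • (Δop n ^ i) aLam := by
        rw [← key i]; abel
      rw [hkey]
      have ih' : Dop n ((Δop n ^ i) aLam) = (Δop n ^ i) (Dop n aLam) +
          ((i : ℚ) * (((n : ℚ) * k - 2 * m) - i + 1)) • (Δop n ^ (i - 1)) aLam := by
        rw [← ih]; abel
      rw [ih', map_add, map_smul]
      have e2 : Δop n ((Δop n ^ (i - 1)) aLam) = (Δop n ^ i) aLam := by
        conv_rhs => rw [show i = (i - 1) + 1 from (Nat.succ_pred_eq_of_pos hi).symm]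
        rw [pow_succ', Module.End.mul_apply]
      rw [e2]
      have e3 : i + 1 - 1 = i := rfl
      rw [e3]
      push_cast
      module
  rw [main i hi]
  congr 1
  push_cast
  ring
end

section
/- (Additivity lemma of Pak and Panova.) Let k₁, k₂, n : ℕ with k₁ ≥ 2, k₂ ≥ 2, n ≥ 2, at least one of k₁, k₂, n strictly greater than 2, and at least one of k₁, k₂, n even. If the Gaussian coefficients [n+k₁ choose n] and [n+k₂ choose n] are strictly unimodal (i.e., p(k₁,n,m) > p(k₁,n,m−1) for all m with 2 ≤ m and 2m ≤ nk₁, and likewise for k₂), then [n+k₁+k₂ choose n] is strictly unimodal: p(k₁+k₂,n,m) > p(k₁+k₂,n,m−1) for all m with 2 ≤ m and 2m ≤ n(k₁+k₂). -/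
open MvPolynomial

namespace PP

abbrev A (n : ℕ) := MvPolynomial (Fin (n+1)) ℚ

/-- degree statistic -/
def sD (n : ℕ) (ν : Fin (n+1) →₀ ℕ) : ℕ := ∑ i : Fin (n+1), ν i
/-- weight statistic -/
def sW (n : ℕ) (ν : Fin (n+1) →₀ ℕ) : ℕ := ∑ i : Fin (n+1), (i : ℕ) * ν i

lemma sD_add {n : ℕ} (ν μ : Fin (n+1) →₀ ℕ) : sD n (ν + μ) = sD n ν + sD n μ := by
  simp [sD, Finset.sum_add_distrib]

lemma sW_add {n : ℕ} (ν μ : Fin (n+1) →₀ ℕ) : sW n (ν + μ) = sW n ν + sW n μ := by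
  simp [sW, mul_add, Finset.sum_add_distrib]

lemma sD_single {n : ℕ} (j : Fin (n+1)) (c : ℕ) : sD n (Finsupp.single j c) = c := by
  simp [sD, Finsupp.single_apply]

lemma sW_single {n : ℕ} (j : Fin (n+1)) (c : ℕ) : sW n (Finsupp.single j c) = (j : ℕ) * c := by
  rw [sW, Finset.sum_eq_single j]
  · simp
  · intro b _ hb; simp [Finsupp.single_apply, Ne.symm hb]
  · simp

lemma mem_Q_monomial {n k m : ℕ} {ν : Fin (n+1) →₀ ℕ} (h1 : sD n ν = k) (h2 : sW n ν = m) :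
    (monomial ν (1 : ℚ)) ∈ Qspace n k m :=
  Submodule.subset_span ⟨ν, h1, h2, rfl⟩

lemma Qspace_le {n k m : ℕ} {p : Submodule ℚ (A n)}
    (h : ∀ ν : Fin (n+1) →₀ ℕ, sD n ν = k → sW n ν = m → (monomial ν (1:ℚ)) ∈ p) :
    Qspace n k m ≤ p := by
  apply Submodule.span_le.mpr
  rintro x ⟨ν, h1, h2, rfl⟩
  exact h ν h1 h2

/-- key monomial decomposition when `ν j ≠ 0` -/
lemma nu_decomp {n : ℕ} {ν : Fin (n+1) →₀ ℕ} {j : Fin (n+1)} (h : ν j ≠ 0) :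
    (ν - Finsupp.single j 1) + Finsupp.single j 1 = ν := by
  ext i
  rcases eq_or_ne i j with rfl | hij
  · simp only [Finsupp.coe_add, Finsupp.coe_tsub, Pi.add_apply, Pi.sub_apply,
      Finsupp.single_eq_same]
    omega
  · simp [Finsupp.single_apply, Ne.symm hij]

lemma Dop_monomial {n : ℕ} (ν : Fin (n+1) →₀ ℕ) :
    Dop n (monomial ν (1:ℚ)) = ∑ i : Fin n, ((i : ℚ) + 1) •
      (X i.castSucc * monomial (ν - Finsupp.single i.succ 1) ((ν i.succ : ℚ))) := by
  simp [Dop, LinearMap.sum_apply, pderiv_monomial]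

lemma Δop_monomial {n : ℕ} (ν : Fin (n+1) →₀ ℕ) :
    Δop n (monomial ν (1:ℚ)) = ∑ i : Fin n, ((n : ℚ) - (i : ℚ)) •
      (X i.succ * monomial (ν - Finsupp.single i.castSucc 1) ((ν i.castSucc : ℚ))) := by
  simp [Δop, LinearMap.sum_apply, pderiv_monomial]

/-- X j * (∂ⱼ' monomial)-type term lies in appropriate Q space -/
lemma term_mem {n k m : ℕ} (ν : Fin (n+1) →₀ ℕ) (hd : sD n ν = k)
    (j j' : Fin (n+1)) (hw : sW n ν + (j':ℕ) = m + (j:ℕ)) :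
    X j' * monomial (ν - Finsupp.single j 1) ((ν j : ℚ)) ∈ Qspace n k m := by
  by_cases h : ν j = 0
  · simp [h]
  · have hdec := nu_decomp (n := n) (ν := ν) (j := j) h
    set ν' := ν - Finsupp.single j 1 with hν'
    have hd' : sD n ν' + 1 = k := by
      have := sD_add ν' (Finsupp.single j 1)
      rw [hdec] at this; rw [hd] at this; rw [sD_single] at this; omega
    have hw' : sW n ν' + (j:ℕ) = sW n ν := by
      have := sW_add ν' (Finsupp.single j 1)
      rw [hdec] at this; rw [this, sW_single]; ring
    have hx : X j' * monomial ν' ((ν j : ℚ)) = (ν j : ℚ) • monomial (Finsupp.single j' 1 + ν') 1 := by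
      rw [X, monomial_mul, smul_monomial]
      simp
    rw [hx]
    apply Submodule.smul_mem
    apply mem_Q_monomial
    · rw [sD_add, sD_single]; omega
    · rw [sW_add, sW_single]; omega

lemma Dop_maps {n k m : ℕ} : ∀ v ∈ Qspace n k (m+1), Dop n v ∈ Qspace n k m := by
  have : Qspace n k (m+1) ≤ Submodule.comap (Dop n) (Qspace n k m) := by
    apply Qspace_le
    intro ν hd hw
    simp only [Submodule.mem_comap, Dop_monomial]
    apply Submodule.sum_mem
    intro i _
    apply Submodule.smul_mem
    apply term_mem ν hd i.succ i.castSucc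
    simp only [Fin.coe_castSucc, Fin.val_succ]; omega
  exact fun v hv => this hv

lemma Δop_maps {n k m : ℕ} : ∀ v ∈ Qspace n k m, Δop n v ∈ Qspace n k (m+1) := by
  have : Qspace n k m ≤ Submodule.comap (Δop n) (Qspace n k (m+1)) := by
    apply Qspace_le
    intro ν hd hw
    simp only [Submodule.mem_comap, Δop_monomial]
    apply Submodule.sum_mem
    intro i _
    apply Submodule.smul_mem
    apply term_mem ν hd i.castSucc i.succ
    simp only [Fin.coe_castSucc, Fin.val_succ]; omega
  exact fun v hv => this hv

lemma Dop_kills_zero {n k : ℕ} : ∀ v ∈ Qspace n k 0, Dop n v = 0 := by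
  have : Qspace n k 0 ≤ LinearMap.ker (Dop n) := by
    apply Qspace_le
    intro ν hd hw
    have hz : ∀ j : Fin (n+1), (j:ℕ) ≠ 0 → ν j = 0 := by
      intro j hj
      have h0 : ∀ i ∈ (Finset.univ : Finset (Fin (n+1))), (i:ℕ) * ν i = 0 := by
        rw [sW] at hw
        intro i hi
        exact (Finset.sum_eq_zero_iff).mp hw i hi
      have := h0 j (Finset.mem_univ j)
      rcases Nat.mul_eq_zero.mp this with h | h
      · exact absurd h hj
      · exact h
    rw [LinearMap.mem_ker, Dop_monomial]
    apply Finset.sum_eq_zero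
    intro i _
    rw [hz i.succ (by simp)]
    simp
  exact fun v hv => this hv


noncomputable def Eop (n : ℕ) : A n →ₗ[ℚ] A n :=
  ∑ i : Fin (n+1), ((n : ℚ) - 2*(i : ℕ)) •
    ((LinearMap.mulLeft ℚ (X i)).comp (pderiv i).toLinearMap)

lemma der_sum_apply {n : ℕ} {ι : Type*} (s : Finset ι) (D : ι → Derivation ℚ (A n) (A n))
    (f : A n) : (∑ i ∈ s, D i) f = ∑ i ∈ s, D i f := by
  induction s using Finset.cons_induction with
  | empty => simp
  | cons a s ha ih => rw [Finset.sum_cons, Derivation.add_apply, ih, Finset.sum_cons]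

noncomputable def Dder (n : ℕ) : Derivation ℚ (A n) (A n) :=
  ∑ i : Fin n, (((i : ℚ) + 1) • (X i.castSucc : A n)) • (pderiv i.succ)

noncomputable def Δder (n : ℕ) : Derivation ℚ (A n) (A n) :=
  ∑ i : Fin n, (((n : ℚ) - (i : ℚ)) • (X i.succ : A n)) • (pderiv i.castSucc)

noncomputable def Eder (n : ℕ) : Derivation ℚ (A n) (A n) :=
  ∑ i : Fin (n+1), (((n : ℚ) - 2*(i : ℕ)) • (X i : A n)) • (pderiv i)

lemma Dop_eq {n : ℕ} (f : A n) : Dop n f = Dder n f := by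
  rw [Dder, der_sum_apply, Dop, LinearMap.sum_apply]
  refine Finset.sum_congr rfl fun i _ => ?_
  rw [Derivation.smul_apply, smul_assoc, LinearMap.smul_apply]
  rfl

lemma Δop_eq {n : ℕ} (f : A n) : Δop n f = Δder n f := by
  rw [Δder, der_sum_apply, Δop, LinearMap.sum_apply]
  refine Finset.sum_congr rfl fun i _ => ?_
  rw [Derivation.smul_apply, smul_assoc, LinearMap.smul_apply]
  rfl

lemma Eop_eq {n : ℕ} (f : A n) : Eop n f = Eder n f := by
  rw [Eder, der_sum_apply, Eop, LinearMap.sum_apply]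
  refine Finset.sum_congr rfl fun i _ => ?_
  rw [Derivation.smul_apply, smul_assoc, LinearMap.smul_apply]
  rfl

-- evaluation on variables
lemma Dder_X_zero {n : ℕ} : Dder n (X (0 : Fin (n+1))) = 0 := by
  rw [Dder, der_sum_apply]
  apply Finset.sum_eq_zero
  intro i _
  have h : (pderiv (i.succ)) (X (0 : Fin (n+1)) : A n) = 0 := by
    exact pderiv_X_of_ne (fun h => (Fin.succ_ne_zero i) h.symm)
  rw [Derivation.smul_apply, h, smul_zero]

lemma Dder_X_succ {n : ℕ} (i₀ : Fin n) :
    Dder n (X i₀.succ) = ((i₀ : ℚ) + 1) • (X i₀.castSucc : A n) := by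
  rw [Dder, der_sum_apply]
  rw [Finset.sum_eq_single i₀]
  · rw [Derivation.smul_apply, pderiv_X_self, smul_eq_mul, mul_one]
  · intro i _ hne
    rw [Derivation.smul_apply,
      pderiv_X_of_ne (fun h => hne (Fin.succ_injective _ h).symm), smul_zero]
  · intro h; exact absurd (Finset.mem_univ i₀) h

lemma Δder_X_last {n : ℕ} : Δder n (X (Fin.last n)) = 0 := by
  rw [Δder, der_sum_apply]
  apply Finset.sum_eq_zero
  intro i _
  rw [Derivation.smul_apply,
    pderiv_X_of_ne (fun h => (ne_of_lt (Fin.castSucc_lt_last i)) h.symm), smul_zero]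

lemma Δder_X_castSucc {n : ℕ} (i₀ : Fin n) :
    Δder n (X i₀.castSucc) = ((n : ℚ) - (i₀ : ℚ)) • (X i₀.succ : A n) := by
  rw [Δder, der_sum_apply]
  rw [Finset.sum_eq_single i₀]
  · rw [Derivation.smul_apply, pderiv_X_self, smul_eq_mul, mul_one]
  · intro i _ hne
    rw [Derivation.smul_apply,
      pderiv_X_of_ne (fun h => hne (Fin.castSucc_injective _ h).symm), smul_zero]
  · intro h; exact absurd (Finset.mem_univ i₀) h

lemma Eder_X {n : ℕ} (j : Fin (n+1)) :
    Eder n (X j) = ((n : ℚ) - 2*(j : ℕ)) • (X j : A n) := by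
  rw [Eder, der_sum_apply]
  rw [Finset.sum_eq_single j]
  · rw [Derivation.smul_apply, pderiv_X_self, smul_eq_mul, mul_one]
  · intro i _ hne
    rw [Derivation.smul_apply, pderiv_X_of_ne hne.symm, smul_zero]
  · intro h; exact absurd (Finset.mem_univ j) h

lemma bracket_eq {n : ℕ} : ⁅Dder n, Δder n⁆ = Eder n := by
  apply MvPolynomial.derivation_ext
  intro j
  rw [Derivation.commutator_apply, Eder_X]
  induction j using Fin.cases with
  | zero =>
    rw [Dder_X_zero, map_zero, sub_zero]
    rcases Nat.eq_zero_or_pos n with hn | hn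
    · subst hn
      have h0 : (0 : Fin 1) = Fin.last 0 := rfl
      rw [h0, Δder_X_last, map_zero]
      norm_num
    · have h0 : (0 : Fin (n+1)) = (⟨0, hn⟩ : Fin n).castSucc := rfl
      rw [h0, Δder_X_castSucc, Derivation.map_smul, Dder_X_succ, smul_smul, ← h0]
      congr 1
      norm_num
  | succ i₀ =>
    rw [Dder_X_succ, Derivation.map_smul, Δder_X_castSucc, smul_smul]
    rcases Nat.lt_or_ge ((i₀ : ℕ) + 1) n with hlt | hge
    · have hsucc : i₀.succ = (⟨(i₀:ℕ)+1, hlt⟩ : Fin n).castSucc := by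
        apply Fin.ext; simp
      rw [hsucc, Δder_X_castSucc, Derivation.map_smul, Dder_X_succ, smul_smul]
      have hcs : (⟨(i₀:ℕ)+1, hlt⟩ : Fin n).castSucc = i₀.succ := by
        apply Fin.ext; simp
      rw [← sub_smul]
      congr 1
      simp only [Fin.val_succ, Fin.val_mk, Fin.coe_castSucc]
      push_cast
      ring
    · have hlast : i₀.succ = Fin.last n := by
        apply Fin.ext
        simp only [Fin.val_succ, Fin.val_last]
        have := i₀.isLt; omega
      rw [hlast, Δder_X_last, map_zero, zero_sub, ← hlast, ← neg_smul]
      congr 1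
      have h2 : (i₀:ℕ) + 1 = n := by
        have := congrArg Fin.val hlast
        simpa using this
      have hn' : (n:ℚ) = ((i₀:ℕ):ℚ) + 1 := by exact_mod_cast h2.symm
      rw [hn']
      simp only [Fin.val_succ]
      push_cast
      ring


lemma comm_apply {n : ℕ} (f : A n) :
    Dop n (Δop n f) - Δop n (Dop n f) = Eop n f := by
  rw [Dop_eq (Δop n f), Δop_eq (Dop n f), Eop_eq, Δop_eq f, Dop_eq f, ← bracket_eq,
    Derivation.commutator_apply]

lemma smul_cancel {n : ℕ} {c : ℚ} (hc : c ≠ 0) {v : A n} (h : c • v = 0) : v = 0 := by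
  have := congrArg (fun x => c⁻¹ • x) h
  simpa [smul_smul, inv_mul_cancel₀ hc] using this

lemma Xi_pderiv_monomial {n : ℕ} (ν : Fin (n+1) →₀ ℕ) (i : Fin (n+1)) :
    X i * (pderiv i (monomial ν (1:ℚ))) = (ν i : ℚ) • monomial ν (1:ℚ) := by
  rw [pderiv_monomial, one_mul]
  by_cases h : ν i = 0
  · simp [h]
  · have hdec : Finsupp.single i 1 + (ν - Finsupp.single i 1) = ν := by
      exact (add_comm _ _).trans (nu_decomp h)
    rw [X, monomial_mul, one_mul, smul_monomial, smul_eq_mul, mul_one]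
    exact congrArg (fun t => monomial t ((ν i : ℚ))) hdec

lemma Eop_monomial {n : ℕ} (ν : Fin (n+1) →₀ ℕ) :
    Eop n (monomial ν (1:ℚ)) =
      ((n : ℚ) * (sD n ν : ℚ) - 2 * (sW n ν : ℚ)) • monomial ν (1:ℚ) := by
  rw [Eop, LinearMap.sum_apply]
  have hterm : ∀ i : Fin (n+1),
      (((n : ℚ) - 2*((i:ℕ) : ℚ)) • ((LinearMap.mulLeft ℚ (X i)).comp (pderiv i).toLinearMap))
        (monomial ν (1:ℚ))
      = (((n : ℚ) - 2*((i:ℕ) : ℚ)) * (ν i : ℚ)) • monomial ν (1:ℚ) := by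
    intro i
    rw [LinearMap.smul_apply, LinearMap.comp_apply]
    have : (LinearMap.mulLeft ℚ (X i)) ((pderiv i).toLinearMap (monomial ν (1:ℚ)))
        = (ν i : ℚ) • monomial ν (1:ℚ) := by
      rw [LinearMap.mulLeft_apply, Derivation.coeFn_coe]
      exact Xi_pderiv_monomial ν i
    rw [this, smul_smul]
  rw [Finset.sum_congr rfl (fun i _ => hterm i), ← Finset.sum_smul]
  congr 1
  rw [sD, sW]
  push_cast
  rw [Finset.mul_sum, Finset.mul_sum, ← Finset.sum_sub_distrib]
  exact Finset.sum_congr rfl (fun i _ => by ring)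

lemma Eop_on_Q {n k m : ℕ} : ∀ v ∈ Qspace n k m,
    Eop n v = ((n : ℚ) * (k : ℚ) - 2 * (m : ℚ)) • v := by
  have : Qspace n k m ≤
      LinearMap.eqLocus (Eop n) (((n : ℚ) * (k : ℚ) - 2 * (m : ℚ)) • LinearMap.id) := by
    apply Qspace_le
    intro ν hd hw
    show Eop n (monomial ν (1:ℚ)) = _
    rw [Eop_monomial, hd, hw]
    simp
  intro v hv
  exact this hv

lemma comm_on_Q {n k m : ℕ} {v : A n} (hv : v ∈ Qspace n k m) :
    Dop n (Δop n v) - Δop n (Dop n v) = ((n : ℚ) * (k : ℚ) - 2 * (m : ℚ)) • v := by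
  rw [comm_apply]
  exact Eop_on_Q v hv

/-- the key sl₂ positivity lemma -/
lemma eig (n k : ℕ) : ∀ m : ℕ, 2*m < n*k → ∀ lam : ℚ, lam ≤ 0 →
    ∀ v ∈ Qspace n k m, Dop n (Δop n v) = lam • v → v = 0 := by
  intro m
  induction m with
  | zero =>
    intro hm lam hlam v hv heq
    have hD0 : Dop n v = 0 := Dop_kills_zero v hv
    have hc := comm_on_Q hv
    rw [hD0, map_zero, sub_zero, heq] at hc
    have hz : (lam - ((n : ℚ) * (k : ℚ) - 2 * ((0:ℕ) : ℚ))) • v = 0 := by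
      rw [sub_smul, hc, sub_self]
    have hpos : (0:ℚ) < (n : ℚ) * (k : ℚ) := by
      have : 0 < n * k := by omega
      exact_mod_cast this
    refine smul_cancel ?_ hz
    push_cast
    intro hcon
    nlinarith
  | succ m ih =>
    intro hm lam hlam v hv heq
    set c : ℚ := (n : ℚ) * (k : ℚ) - 2 * ((m+1 : ℕ) : ℚ) with hcdef
    have hcpos : 0 < c := by
      have : 2*(m+1) < n*k := hm
      rw [hcdef]
      push_cast
      have : ((2*(m+1) : ℕ) : ℚ) < ((n*k : ℕ) : ℚ) := by exact_mod_cast this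
      push_cast at this
      nlinarith
    have hc := comm_on_Q hv
    rw [heq] at hc
    have hΔD : Δop n (Dop n v) = (lam - c) • v := by
      rw [sub_smul, ← hc]
      abel
    have hw : Dop n v ∈ Qspace n k m := Dop_maps v hv
    have heq2 : Dop n (Δop n (Dop n v)) = (lam - c) • (Dop n v) := by
      rw [hΔD, map_smul]
    have hw0 : Dop n v = 0 := by
      refine ih (by omega) (lam - c) (by linarith) _ hw heq2
    rw [hw0, map_zero] at hΔD
    refine smul_cancel ?_ hΔD.symm
    intro hcon
    have : lam - c < 0 := by linarith
    rw [hcon] at this; exact lt_irrefl 0 this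

/-! Section 4: dimension of Qspace = pRect -/

def partFS (k n m : ℕ) : Finset (Nat.Partition m) :=
  Finset.univ.filter
    (fun P : Nat.Partition m => Multiset.card P.parts ≤ k ∧ ∀ x ∈ P.parts, x ≤ n)

lemma pRect_eq_card (k n m : ℕ) : pRect k n m = (partFS k n m).card := rfl

noncomputable def toNu (n k : ℕ) {m : ℕ} (P : Nat.Partition m) : Fin (n+1) →₀ ℕ :=
  Finsupp.equivFunOnFinite.symm
    (fun i => if (i : ℕ) = 0 then k - Multiset.card P.parts else P.parts.count (i : ℕ))

lemma toNu_apply {n k m : ℕ} (P : Nat.Partition m) (i : Fin (n+1)) :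
    toNu n k P i = if (i : ℕ) = 0 then k - Multiset.card P.parts else P.parts.count (i : ℕ) :=
  rfl

lemma count_zero_parts {m : ℕ} (P : Nat.Partition m) : P.parts.count 0 = 0 :=
  Multiset.count_eq_zero.mpr (fun h => by have := P.parts_pos h; omega)

lemma sum_mul_count (n : ℕ) (s : Multiset ℕ) (hb : ∀ x ∈ s, x < n + 1) :
    ∑ j ∈ Finset.range (n+1), j * s.count j = s.sum := by
  induction s using Multiset.induction_on with
  | empty => simp
  | cons a s ih =>
    have ha : a ∈ Finset.range (n+1) := by
      simp only [Finset.mem_range]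
      exact hb a (Multiset.mem_cons_self a s)
    have hb' : ∀ x ∈ s, x < n + 1 := fun x hx => hb x (Multiset.mem_cons_of_mem hx)
    simp only [Multiset.count_cons, Multiset.sum_cons]
    have key : ∑ x ∈ Finset.range (n+1), x * (Multiset.count x s + if x = a then 1 else 0)
        = ∑ x ∈ Finset.range (n+1), (x * Multiset.count x s + if x = a then x else 0) := by
      refine Finset.sum_congr rfl fun j _ => ?_
      by_cases hj : j = a
      · subst hj; simp [mul_add]
      · simp [hj]
    rw [key, Finset.sum_add_distrib, ih hb', Finset.sum_ite_eq' (Finset.range (n+1)) a, if_pos ha]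
    ring

lemma sum_count_parts {n m : ℕ} (P : Nat.Partition m) (hb : ∀ x ∈ P.parts, x ≤ n) :
    ∑ j ∈ Finset.range (n+1), P.parts.count j = Multiset.card P.parts := by
  apply Multiset.sum_count_eq_card
  intro a ha
  simp only [Finset.mem_range]
  exact Nat.lt_succ_of_le (hb a ha)

lemma sD_toNu {n k m : ℕ} (P : Nat.Partition m) (hk : Multiset.card P.parts ≤ k)
    (hb : ∀ x ∈ P.parts, x ≤ n) : sD n (toNu n k P) = k := by
  rw [sD]
  have h0 : ∑ i : Fin (n+1), toNu n k P i
      = ∑ i : Fin (n+1), (if (i:ℕ) = 0 then k - Multiset.card P.parts else P.parts.count (i:ℕ)) :=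
    Finset.sum_congr rfl (fun i _ => toNu_apply P i)
  rw [h0, Fin.sum_univ_eq_sum_range
    (fun j => if j = 0 then k - Multiset.card P.parts else P.parts.count j),
    Finset.sum_range_succ']
  simp only [Nat.succ_ne_zero, if_false, if_pos rfl, eq_self_iff_true, if_true]
  have h2 : ∑ j ∈ Finset.range n, P.parts.count (j+1) = Multiset.card P.parts := by
    have h3 := sum_count_parts P hb
    rw [Finset.sum_range_succ'] at h3
    rw [count_zero_parts] at h3
    omega
  omega

lemma sW_toNu {n k m : ℕ} (P : Nat.Partition m)
    (hb : ∀ x ∈ P.parts, x ≤ n) : sW n (toNu n k P) = m := by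
  rw [sW]
  have h0 : ∑ i : Fin (n+1), (i : ℕ) * toNu n k P i
      = ∑ i : Fin (n+1),
        (i:ℕ) * (if (i:ℕ) = 0 then k - Multiset.card P.parts else P.parts.count (i:ℕ)) :=
    Finset.sum_congr rfl (fun i _ => by rw [toNu_apply])
  rw [h0, Fin.sum_univ_eq_sum_range
    (fun j => j * (if j = 0 then k - Multiset.card P.parts else P.parts.count j))]
  have h2 : ∀ j ∈ Finset.range (n+1),
      j * (if j = 0 then k - Multiset.card P.parts else P.parts.count j)
        = j * P.parts.count j := by
    intro j _
    by_cases hj : j = 0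
    · subst hj; simp
    · rw [if_neg hj]
  rw [Finset.sum_congr rfl h2, sum_mul_count n _ (fun x hx => Nat.lt_succ_of_le (hb x hx))]
  exact P.parts_sum

lemma toNu_injOn {n k m : ℕ} {P Q : Nat.Partition m}
    (hP : P ∈ partFS k n m) (hQ : Q ∈ partFS k n m)
    (h : toNu n k P = toNu n k Q) : P = Q := by
  simp only [partFS, Finset.mem_filter] at hP hQ
  ext a
  rcases Nat.eq_zero_or_pos a with rfl | hapos
  · rw [count_zero_parts, count_zero_parts]
  rcases Nat.lt_or_ge a (n+1) with hlt | hge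
  · have := Finsupp.ext_iff.mp h ⟨a, hlt⟩
    rw [toNu_apply, toNu_apply] at this
    simpa [Nat.pos_iff_ne_zero.mp hapos] using this
  · rw [Multiset.count_eq_zero.mpr, Multiset.count_eq_zero.mpr]
    · intro hmem; have := hQ.2.2 a hmem; omega
    · intro hmem; have := hP.2.2 a hmem; omega

/-- reconstruction of the multiset of parts from an exponent vector -/
def partsOf (n : ℕ) (ν : Fin (n+1) →₀ ℕ) : Multiset ℕ :=
  ∑ i ∈ Finset.univ.filter (fun i : Fin (n+1) => (i : ℕ) ≠ 0), Multiset.replicate (ν i) (i : ℕ)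

lemma mem_partsOf {n : ℕ} {ν : Fin (n+1) →₀ ℕ} {x : ℕ} (hx : x ∈ partsOf n ν) :
    0 < x ∧ x ≤ n := by
  rw [partsOf, Multiset.mem_sum] at hx
  obtain ⟨i, hi, hmem⟩ := hx
  have := Multiset.eq_of_mem_replicate hmem
  subst this
  simp only [Finset.mem_filter] at hi
  exact ⟨Nat.pos_of_ne_zero hi.2, Nat.lt_succ_iff.mp i.isLt⟩

lemma count_partsOf {n : ℕ} (ν : Fin (n+1) →₀ ℕ) (i : Fin (n+1)) (hi : (i : ℕ) ≠ 0) :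
    (partsOf n ν).count (i : ℕ) = ν i := by
  rw [partsOf, Multiset.count_sum']
  rw [Finset.sum_eq_single i]
  · rw [Multiset.count_replicate, if_pos rfl]
  · intro b hb hne
    rw [Multiset.count_replicate, if_neg]
    intro hval
    exact hne (Fin.ext hval)
  · intro h
    exact absurd (Finset.mem_filter.mpr ⟨Finset.mem_univ i, hi⟩) h

lemma msum_fsum {ι : Type*} (s : Finset ι) (f : ι → Multiset ℕ) :
    (∑ i ∈ s, f i).sum = ∑ i ∈ s, (f i).sum := by
  induction s using Finset.cons_induction with
  | empty => simp
  | cons a s ha ih => rw [Finset.sum_cons, Multiset.sum_add, ih, Finset.sum_cons]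

lemma mcard_fsum {ι : Type*} (s : Finset ι) (f : ι → Multiset ℕ) :
    Multiset.card (∑ i ∈ s, f i) = ∑ i ∈ s, Multiset.card (f i) := by
  induction s using Finset.cons_induction with
  | empty => simp
  | cons a s ha ih => rw [Finset.sum_cons, Multiset.card_add, ih, Finset.sum_cons]

lemma filter_ne_zero_eq {n : ℕ} :
    (Finset.univ.filter (fun i : Fin (n+1) => (i : ℕ) ≠ 0)) = Finset.univ.erase 0 := by
  ext i
  simp [Finset.mem_erase]

lemma sum_partsOf {n : ℕ} (ν : Fin (n+1) →₀ ℕ) : (partsOf n ν).sum = sW n ν := by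
  rw [partsOf, msum_fsum]
  have h1 : ∀ i ∈ Finset.univ.filter (fun i : Fin (n+1) => (i : ℕ) ≠ 0),
      (Multiset.replicate (ν i) (i : ℕ)).sum = (i : ℕ) * ν i := by
    intro i _
    rw [Multiset.sum_replicate, smul_eq_mul, mul_comm]
  rw [Finset.sum_congr rfl h1, sW]
  apply Finset.sum_subset (Finset.filter_subset _ _)
  intro i _ hni
  simp only [Finset.mem_filter, Finset.mem_univ, true_and, not_not] at hni
  rw [hni, zero_mul]

lemma card_partsOf {n k : ℕ} (ν : Fin (n+1) →₀ ℕ) (hd : sD n ν = k) :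
    Multiset.card (partsOf n ν) + ν 0 = k := by
  rw [partsOf, mcard_fsum]
  have h1 : ∀ i ∈ Finset.univ.filter (fun i : Fin (n+1) => (i : ℕ) ≠ 0),
      Multiset.card (Multiset.replicate (ν i) (i : ℕ)) = ν i := by
    intro i _; rw [Multiset.card_replicate]
  rw [Finset.sum_congr rfl h1, filter_ne_zero_eq]
  rw [Finset.sum_erase_add _ _ (Finset.mem_univ 0)]
  exact hd

lemma toNu_surj {n k m : ℕ} (ν : Fin (n+1) →₀ ℕ) (hd : sD n ν = k) (hw : sW n ν = m) :
    ∃ P ∈ partFS k n m, toNu n k P = ν := by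
  refine ⟨⟨partsOf n ν, fun {x} hx => (mem_partsOf hx).1, by rw [sum_partsOf, hw]⟩, ?_, ?_⟩
  · simp only [partFS, Finset.mem_filter, Finset.mem_univ, true_and]
    constructor
    · show Multiset.card (partsOf n ν) ≤ k
      have := card_partsOf ν hd; omega
    · exact fun x hx => (mem_partsOf hx).2
  · ext i
    rw [toNu_apply]
    by_cases hi : (i : ℕ) = 0
    · rw [if_pos hi]
      have h0 : i = 0 := Fin.ext (by simpa using hi)
      subst h0
      have := card_partsOf ν hd
      show k - Multiset.card (partsOf n ν) = ν 0
      omega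
    · rw [if_neg hi]
      exact count_partsOf ν i hi

lemma Qspace_gen_eq (n k m : ℕ) :
    { p : A n | ∃ ν : Fin (n+1) →₀ ℕ,
      (∑ i : Fin (n+1), ν i) = k ∧ (∑ i : Fin (n+1), (i : ℕ) * ν i) = m ∧
        p = monomial ν (1 : ℚ) }
    = (fun P : Nat.Partition m => monomial (toNu n k P) (1:ℚ)) '' ↑(partFS k n m) := by
  ext p
  constructor
  · rintro ⟨ν, hd, hw, rfl⟩
    obtain ⟨P, hP, hPν⟩ := toNu_surj ν hd hw
    exact ⟨P, hP, congrArg (fun t => monomial t (1:ℚ)) hPν⟩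
  · rintro ⟨P, hP, rfl⟩
    simp only [partFS, Finset.coe_filter, Set.mem_setOf_eq, Finset.mem_univ, true_and] at hP
    exact ⟨toNu n k P, sD_toNu P hP.1 hP.2, sW_toNu P hP.2, rfl⟩

lemma Qspace_eq_span (n k m : ℕ) :
    Qspace n k m = Submodule.span ℚ
      ((partFS k n m).image (fun P => monomial (toNu n k P) (1:ℚ)) : Finset (A n)) := by
  rw [Qspace, Qspace_gen_eq, Finset.coe_image]

lemma finDimQ (n k m : ℕ) : FiniteDimensional ℚ (Qspace n k m) := by
  rw [Qspace_eq_span]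
  infer_instance

lemma finrank_Q (n k m : ℕ) :
    Module.finrank ℚ (Qspace n k m) = pRect k n m := by
  rw [Qspace_eq_span, pRect_eq_card]
  have hLI : LinearIndependent ℚ
      ((↑) : ((partFS k n m).image (fun P => monomial (toNu n k P) (1:ℚ)) : Finset (A n))
        → A n) := by
    have hb := (MvPolynomial.basisMonomials (Fin (n+1)) ℚ).linearIndependent
    have hr := LinearIndependent.linearIndepOn_id hb
    have hsub : (((partFS k n m).image
        (fun P => monomial (toNu n k P) (1:ℚ)) : Finset (A n)) : Set (A n))
        ⊆ Set.range (MvPolynomial.basisMonomials (Fin (n+1)) ℚ) := by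
      intro p hp
      simp only [Finset.coe_image, Set.mem_image] at hp
      obtain ⟨P, _, rfl⟩ := hp
      exact ⟨toNu n k P, by rw [coe_basisMonomials]⟩
    exact hr.mono hsub
  rw [finrank_span_finset_eq_card hLI]
  apply Finset.card_image_of_injOn
  intro P hP Q hQ h
  exact toNu_injOn hP hQ (monomial_left_injective one_ne_zero h)

set_option synthInstance.maxHeartbeats 1000000
set_option maxHeartbeats 1000000

/-! Section 5: surjectivity of D below the middle, and the rank identity -/

lemma DΔ_mem {n k m : ℕ} : ∀ x ∈ Qspace n k m, Dop n (Δop n x) ∈ Qspace n k m :=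
  fun x hx => Dop_maps _ (Δop_maps x hx)

lemma D_surj {n k m : ℕ} (h2 : 2*(m+1) ≤ n*k) :
    ∀ y ∈ Qspace n k m, ∃ x ∈ Qspace n k (m+1), Dop n x = y := by
  haveI := finDimQ n k m
  set T : Qspace n k m →ₗ[ℚ] Qspace n k m :=
    ((Dop n) ∘ₗ (Δop n)).restrict (p := Qspace n k m) (q := Qspace n k m) DΔ_mem with hT
  have hinj : Function.Injective T := by
    rw [← LinearMap.ker_eq_bot, Submodule.eq_bot_iff]
    rintro ⟨x, hx⟩ hker
    have hx0 : Dop n (Δop n x) = 0 := by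
      have : (T ⟨x, hx⟩ : A n) = 0 := by rw [hker]; rfl
      simpa [hT, LinearMap.restrict_apply] using this
    have : x = 0 := by
      refine eig n k m (by omega) 0 le_rfl x hx ?_
      rw [hx0, zero_smul]
    exact Subtype.ext this
  have hsurj : Function.Surjective T := (LinearMap.injective_iff_surjective).mp hinj
  intro y hy
  obtain ⟨x, hx⟩ := hsurj ⟨y, hy⟩
  refine ⟨Δop n (x : A n), Δop_maps _ x.2, ?_⟩
  have := congrArg (Subtype.val) hx
  simpa [hT, LinearMap.restrict_apply] using this

lemma pRect_step {n k m : ℕ} (h2 : 2*(m+1) ≤ n*k) :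
    pRect k n (m+1) = pRect k n m + Module.finrank ℚ (Sspace n k (m+1)) := by
  haveI := finDimQ n k (m+1)
  haveI := finDimQ n k m
  set Dres : Qspace n k (m+1) →ₗ[ℚ] Qspace n k m :=
    (Dop n).restrict (p := Qspace n k (m+1)) (q := Qspace n k m) Dop_maps with hD
  have hrank := LinearMap.finrank_range_add_finrank_ker Dres
  have hsurtop : LinearMap.range Dres = ⊤ := by
    rw [LinearMap.range_eq_top]
    rintro ⟨y, hy⟩
    obtain ⟨x, hx, hDx⟩ := D_surj h2 y hy
    refine ⟨⟨x, hx⟩, ?_⟩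
    apply Subtype.ext
    simpa [hD, LinearMap.restrict_apply] using hDx
  rw [hsurtop, finrank_top] at hrank
  have hker : LinearMap.ker Dres
      = Submodule.comap (Qspace n k (m+1)).subtype (Sspace n k (m+1)) := by
    ext ⟨x, hx⟩
    simp only [LinearMap.mem_ker, Submodule.mem_comap, Submodule.subtype_apply, Sspace,
      Submodule.mem_inf, LinearMap.mem_ker]
    constructor
    · intro h
      refine ⟨hx, ?_⟩
      have := congrArg (Subtype.val) h
      simpa [hD, LinearMap.restrict_apply] using this
    · intro h
      apply Subtype.ext
      simpa [hD, LinearMap.restrict_apply] using h.2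
  have hkerrank : Module.finrank ℚ (LinearMap.ker Dres)
      = Module.finrank ℚ (Sspace n k (m+1)) := by
    rw [hker]
    exact (Submodule.comapSubtypeEquivOfLe
      (inf_le_left : Sspace n k (m+1) ≤ Qspace n k (m+1))).finrank_eq
  rw [hkerrank] at hrank
  rw [← finrank_Q n k (m+1), ← finrank_Q n k m, ← hrank, Nat.add_comm]

lemma S_nontrivial_of_lt {n k m : ℕ} (h2 : 2*(m+1) ≤ n*k)
    (hlt : pRect k n m < pRect k n (m+1)) :
    ∃ v ∈ Sspace n k (m+1), v ≠ 0 := by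
  by_contra hcon
  push_neg at hcon
  have hbot : Sspace n k (m+1) = ⊥ := by
    rw [Submodule.eq_bot_iff]
    exact fun x hx => hcon x hx
  have := pRect_step h2
  rw [hbot, finrank_bot] at this
  omega

lemma lt_of_S_nontrivial {n k m : ℕ} (h2 : 2*(m+1) ≤ n*k)
    {v : A n} (hv : v ∈ Sspace n k (m+1)) (hne : v ≠ 0) :
    pRect k n m < pRect k n (m+1) := by
  haveI := finDimQ n k (m+1)
  haveI : FiniteDimensional ℚ (Sspace n k (m+1)) :=
    Submodule.finiteDimensional_of_le (inf_le_left : Sspace n k (m+1) ≤ Qspace n k (m+1))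
  have hpos : 0 < Module.finrank ℚ (Sspace n k (m+1)) := by
    rw [Module.finrank_pos_iff]
    exact ⟨⟨⟨v, hv⟩, 0, fun h => hne (by simpa using congrArg Subtype.val h)⟩⟩
  have := pRect_step h2
  omega

/-! products of semi-invariants -/

lemma mul_mem_Q {n k₁ m₁ k₂ m₂ : ℕ} {I J : A n}
    (hI : I ∈ Qspace n k₁ m₁) (hJ : J ∈ Qspace n k₂ m₂) :
    I * J ∈ Qspace n (k₁ + k₂) (m₁ + m₂) := by
  have step1 : ∀ ν : Fin (n+1) →₀ ℕ, sD n ν = k₁ → sW n ν = m₁ →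
      (monomial ν (1:ℚ)) * J ∈ Qspace n (k₁ + k₂) (m₁ + m₂) := by
    intro ν hd hw
    have : Qspace n k₂ m₂ ≤ Submodule.comap
        (LinearMap.mulLeft ℚ (monomial ν (1:ℚ))) (Qspace n (k₁ + k₂) (m₁ + m₂)) := by
      apply Qspace_le
      intro μ hd' hw'
      simp only [Submodule.mem_comap, LinearMap.mulLeft_apply]
      rw [monomial_mul, one_mul]
      apply mem_Q_monomial
      · rw [sD_add]; omega
      · rw [sW_add]; omega
    exact this hJ
  have : Qspace n k₁ m₁ ≤ Submodule.comap
      (LinearMap.mulRight ℚ J) (Qspace n (k₁ + k₂) (m₁ + m₂)) := by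
    apply Qspace_le
    intro ν hd hw
    simp only [Submodule.mem_comap, LinearMap.mulRight_apply]
    exact step1 ν hd hw
  exact this hI

lemma Dop_leibniz {n : ℕ} (f g : A n) :
    Dop n (f * g) = f * Dop n g + g * Dop n f := by
  rw [Dop_eq, Dop_eq, Dop_eq, Derivation.leibniz]
  simp [smul_eq_mul]

lemma mul_mem_S {n k₁ m₁ k₂ m₂ : ℕ} {I J : A n}
    (hI : I ∈ Sspace n k₁ m₁) (hJ : J ∈ Sspace n k₂ m₂) :
    I * J ∈ Sspace n (k₁ + k₂) (m₁ + m₂) := by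
  obtain ⟨hIQ, hID⟩ := (Submodule.mem_inf).mp hI
  obtain ⟨hJQ, hJD⟩ := (Submodule.mem_inf).mp hJ
  rw [LinearMap.mem_ker] at hID hJD
  refine Submodule.mem_inf.mpr ⟨mul_mem_Q hIQ hJQ, ?_⟩
  rw [LinearMap.mem_ker, Dop_leibniz, hID, hJD, mul_zero, mul_zero, add_zero]

lemma S_zero_weight {n k : ℕ} :
    (monomial (Finsupp.single (0 : Fin (n+1)) k) (1:ℚ)) ∈ Sspace n k 0 ∧
      (monomial (Finsupp.single (0 : Fin (n+1)) k) (1:ℚ)) ≠ 0 := by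
  have hQ : (monomial (Finsupp.single (0 : Fin (n+1)) k) (1:ℚ)) ∈ Qspace n k 0 := by
    apply mem_Q_monomial
    · rw [sD_single]
    · rw [sW_single]; simp
  refine ⟨Submodule.mem_inf.mpr ⟨hQ, ?_⟩, ?_⟩
  · rw [LinearMap.mem_ker]
    exact Dop_kills_zero _ hQ
  · intro h
    exact one_ne_zero ((monomial_eq_zero).mp h)

lemma four_or_six {n k : ℕ} (hn : 2 ≤ n) (hk : 2 ≤ k) : n * k = 4 ∨ 6 ≤ n * k := by
  rcases Nat.lt_or_ge n 3 with h | h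
  · have hn2 : n = 2 := by omega
    subst hn2
    rcases Nat.lt_or_ge k 3 with h' | h'
    · have : k = 2 := by omega
      subst this; left; rfl
    · right; omega
  · right
    have := Nat.mul_le_mul h hk
    omega

lemma eq_four {n k : ℕ} (hn : 2 ≤ n) (hk : 2 ≤ k) (h : n * k = 4) : n = 2 ∧ k = 2 := by
  rcases Nat.lt_or_ge n 3 with h' | h'
  · have hn2 : n = 2 := by omega
    subst hn2
    exact ⟨rfl, by omega⟩
  · exfalso
    have := Nat.mul_le_mul h' hk
    omega

lemma splitting {n k₁ k₂ m : ℕ} (hk₁ : 2 ≤ k₁) (hk₂ : 2 ≤ k₂) (hn : 2 ≤ n)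
    (hgt : 2 < k₁ ∨ 2 < k₂ ∨ 2 < n) (hev : Even k₁ ∨ Even k₂ ∨ Even n)
    (hm : 2 ≤ m) (hmK : 2 * m ≤ n * (k₁ + k₂)) :
    ∃ m₁ m₂ : ℕ, m₁ + m₂ = m ∧
      (m₁ = 0 ∨ (2 ≤ m₁ ∧ 2 * m₁ ≤ n * k₁)) ∧
      (m₂ = 0 ∨ (2 ≤ m₂ ∧ 2 * m₂ ≤ n * k₂)) := by
  have hA4 : 4 ≤ n * k₁ := by have := Nat.mul_le_mul hn hk₁; omega
  have hB4 : 4 ≤ n * k₂ := by have := Nat.mul_le_mul hn hk₂; omega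
  have hA46 := four_or_six hn hk₁
  have hB46 := four_or_six hn hk₂
  have hsumAB : n * (k₁ + k₂) = n * k₁ + n * k₂ := by ring
  have hA4B : n * k₁ = 4 → 6 ≤ n * k₂ := by
    intro h4
    obtain ⟨hn2, hk₁2⟩ := eq_four hn hk₁ h4
    have hk₂3 : 2 < k₂ := by
      rcases hgt with h | h | h
      · omega
      · exact h
      · omega
    subst hn2
    omega
  have hB4A : n * k₂ = 4 → 6 ≤ n * k₁ := by
    intro h4
    obtain ⟨hn2, hk₂2⟩ := eq_four hn hk₂ h4
    have hk₁3 : 2 < k₁ := by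
      rcases hgt with h | h | h
      · exact h
      · omega
      · omega
    subst hn2
    omega
  have hevAB : n * k₁ % 2 = 0 ∨ n * k₂ % 2 = 0 := by
    rcases hev with h | h | h
    · left; rcases h with ⟨r, hr⟩; subst hr
      have : n * (r + r) = 2 * (n * r) := by ring
      omega
    · right; rcases h with ⟨r, hr⟩; subst hr
      have : n * (r + r) = 2 * (n * r) := by ring
      omega
    · left; rcases h with ⟨r, hr⟩; subst hr
      have : (r + r) * k₁ = 2 * (r * k₁) := by ring
      omega
  rw [hsumAB] at hmK
  by_cases hA : 2 * m ≤ n * k₁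
  · exact ⟨m, 0, by omega, Or.inr ⟨hm, hA⟩, Or.inl rfl⟩
  by_cases hB : 2 * m ≤ n * k₂
  · exact ⟨0, m, by omega, Or.inl rfl, Or.inr ⟨hm, hB⟩⟩
  rcases hevAB with hev1 | hev2
  · by_cases hone : m - n * k₁ / 2 = 1
    · exact ⟨m - 2, 2, by omega, Or.inr ⟨by omega, by omega⟩, Or.inr ⟨le_rfl, by omega⟩⟩
    · exact ⟨n * k₁ / 2, m - n * k₁ / 2, by omega,
        Or.inr ⟨by omega, by omega⟩, Or.inr ⟨by omega, by omega⟩⟩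
  · by_cases hone : m - n * k₂ / 2 = 1
    · exact ⟨2, m - 2, by omega, Or.inr ⟨le_rfl, by omega⟩, Or.inr ⟨by omega, by omega⟩⟩
    · exact ⟨m - n * k₂ / 2, n * k₂ / 2, by omega,
        Or.inr ⟨by omega, by omega⟩, Or.inr ⟨by omega, by omega⟩⟩

end PP

/-- the additivity lemma of Pak and Panova. -/
theorem pak_panova_additivity (k₁ k₂ n : ℕ) (hk₁ : 2 ≤ k₁) (hk₂ : 2 ≤ k₂) (hn : 2 ≤ n)
    (hgt : 2 < k₁ ∨ 2 < k₂ ∨ 2 < n) (hev : Even k₁ ∨ Even k₂ ∨ Even n)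
    (h1 : ∀ m : ℕ, 2 ≤ m → 2 * m ≤ n * k₁ → pRect k₁ n (m - 1) < pRect k₁ n m)
    (h2 : ∀ m : ℕ, 2 ≤ m → 2 * m ≤ n * k₂ → pRect k₂ n (m - 1) < pRect k₂ n m) :
    ∀ m : ℕ, 2 ≤ m → 2 * m ≤ n * (k₁ + k₂) →
      pRect (k₁ + k₂) n (m - 1) < pRect (k₁ + k₂) n m := by
  intro m hm hmK
  obtain ⟨m₁, m₂, hsum, hc1, hc2⟩ :=
    PP.splitting hk₁ hk₂ hn hgt hev hm hmK
  have getS : ∀ k mm : ℕ,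
      (∀ x : ℕ, 2 ≤ x → 2 * x ≤ n * k → pRect k n (x - 1) < pRect k n x) →
      (mm = 0 ∨ (2 ≤ mm ∧ 2 * mm ≤ n * k)) →
      ∃ v ∈ Sspace n k mm, v ≠ 0 := by
    intro k mm hmono hc
    rcases hc with rfl | ⟨hm2, hmle⟩
    · exact ⟨_, (PP.S_zero_weight (n := n) (k := k)).1, (PP.S_zero_weight (n := n) (k := k)).2⟩
    · obtain ⟨t, rfl⟩ : ∃ t, mm = t + 1 := ⟨mm - 1, by omega⟩
      have hlt := hmono (t+1) (by omega) (by omega)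
      have hlt' : pRect k n t < pRect k n (t+1) := by simpa using hlt
      exact PP.S_nontrivial_of_lt (by omega) hlt'
  obtain ⟨I, hIS, hIne⟩ := getS k₁ m₁ h1 hc1
  obtain ⟨J, hJS, hJne⟩ := getS k₂ m₂ h2 hc2
  have hIJ : I * J ∈ Sspace n (k₁ + k₂) (m₁ + m₂) := PP.mul_mem_S hIS hJS
  have hIJne : I * J ≠ 0 := mul_ne_zero hIne hJne
  rw [hsum] at hIJ
  obtain ⟨t, rfl⟩ : ∃ t, m = t + 1 := ⟨m - 1, by omega⟩
  have hfin : pRect (k₁ + k₂) n t < pRect (k₁ + k₂) n (t+1) :=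
    PP.lt_of_S_nontrivial (by omega) hIJ hIJne
  simpa using hfin
end
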